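/- Jucys–Murphy-type product formula for the bt-Weingarten function: Let k ≥ 1. In the module of formal power series in X with coefficients in the free ℤ[b,y]-module with basis 𝒫_k, with the operators 𝒥_i acting coefficientwise, Σ_{𝔪 ∈ 𝒫_k} Wg^(bt)(𝔪) · 𝔪 = (y + X𝒥_k)(1 + X𝒥_k)^{−1} (y + X𝒥_{k−1})(1 + X𝒥_{k−1})^{−1} ⋯ (y + X𝒥_1)(1 + X𝒥_1)^{−1} (𝔢_k), where (1 + X𝒥_i)^{−1} denotes the operator-valued power series Σ_{j≥0} (−X)^j 𝒥_i^j. -/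

import Mathlib

open scoped Classical
open MeasureTheory



/-- A pair partition of `{1, …, 2k}`, encoded as an involution of `ℕ` that
moves exactly the points `1, …, 2k`.  The pairs are the two-element sets `{a, f a}`. -/
structure PairPartition (k : ℕ) where
  f : ℕ → ℕ
  invol : ∀ a, f (f a) = a
  moves : ∀ a, f a ≠ a ↔ (1 ≤ a ∧ a ≤ 2 * k)

namespace PairPartition

/-- The function underlying the identity (trivial) pair partition
`(1 2 | 3 4 | ⋯ | 2k-1 2k)`. -/
def trivFun (k : ℕ) (a : ℕ) : ℕ :=
  if 1 ≤ a ∧ a ≤ 2 * k then (if a % 2 = 1 then a + 1 else a - 1) else a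

/-- The identity pair partition `𝔢_k = (1 2 | 3 4 | ⋯ | 2k-1 2k)`. -/
def triv (k : ℕ) : PairPartition k where
  f := trivFun k
  invol := by intro a; unfold trivFun; split_ifs <;> omega
  moves := by intro a; unfold trivFun; split_ifs <;> omega

theorem ext' {k : ℕ} {m m' : PairPartition k} (h : m.f = m'.f) : m = m' := by
  cases m; cases m'; simpa using h

/-- The action of the transposition `(i j) ∈ S_{2k}` on pair partitions of `{1, …, 2k}`
(defined to do nothing if `i` or `j` lies outside `{1, …, 2k}`). -/
def swapAct {k : ℕ} (i j : ℕ) (m : PairPartition k) : PairPartition k :=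
  if h : 1 ≤ i ∧ i ≤ 2 * k ∧ 1 ≤ j ∧ j ≤ 2 * k then
    { f := fun a => Equiv.swap i j (m.f (Equiv.swap i j a))
      invol := by intro a; simp [m.invol]
      moves := by
        obtain ⟨hi1, hi2, hj1, hj2⟩ := h
        intro a
        have key : ∀ x y : ℕ, Equiv.swap i j x ≠ y ↔ x ≠ Equiv.swap i j y := by
          intro x y
          constructor
          · intro hxy hc; apply hxy; rw [hc]; simp
          · intro hxy hc; apply hxy; rw [← hc]; simp
        rw [key, ← Equiv.swap_apply_self i j a, Equiv.swap_apply_self i j a]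
        rw [m.moves (Equiv.swap i j a)]
        rcases eq_or_ne a i with rfl | hai
        · rw [Equiv.swap_apply_left]; omega
        rcases eq_or_ne a j with rfl | haj
        · rw [Equiv.swap_apply_right]; omega
        · rw [Equiv.swap_apply_of_ne_of_ne hai haj] }
  else m

/-- Removing the pair `{2k-1, 2k}` from a pair partition: the operation `𝔪 ↦ 𝔪↓`
(defined to return the trivial pair partition if `{2k-1, 2k} ∉ 𝔪`). -/
def down {k : ℕ} (m : PairPartition k) : PairPartition (k - 1) :=
  if h : m.f (2 * k - 1) = 2 * k then
    { f := fun a => if a = 2 * k - 1 ∨ a = 2 * k then a else m.f a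
      invol := by
        intro a
        by_cases ha : a = 2 * k - 1 ∨ a = 2 * k
        · simp [ha]
        · have h2k : m.f (2 * k) = 2 * k - 1 := by
            conv_lhs => rw [← h]
            exact m.invol _
          have hne1 : m.f a ≠ 2 * k - 1 := by
            intro hfa
            have h1 : m.f (m.f a) = m.f (2 * k - 1) := by rw [hfa]
            rw [m.invol, h] at h1
            exact ha (Or.inr h1)
          have hne2 : m.f a ≠ 2 * k := by
            intro hfa
            have h1 : m.f (m.f a) = m.f (2 * k) := by rw [hfa]
            rw [m.invol, h2k] at h1
            exact ha (Or.inl h1)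
          simp only [if_neg ha, if_neg (not_or.mpr ⟨hne1, hne2⟩), m.invol]
      moves := by
        intro a
        by_cases ha : a = 2 * k - 1 ∨ a = 2 * k
        · simp only [if_pos ha]
          rcases ha with ha | ha <;> subst ha <;> constructor <;> intro h' <;> first
            | exact absurd rfl h'
            | omega
        · push_neg at ha
          obtain ⟨ha1, ha2⟩ := ha
          simp only [if_neg (not_or.mpr ⟨ha1, ha2⟩)]
          rw [m.moves a]
          omega }
  else triv (k - 1)

/-- A pair partition as a permutation (involution) of `ℕ`. -/
def perm {k : ℕ} (m : PairPartition k) : Equiv.Perm ℕ :=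
  Function.Involutive.toPerm m.f m.invol

end PairPartition

namespace PairPartition

/-- The connected component (cycle) of the multigraph `Γ(𝔪)` containing a vertex `v`:
the orbit of `v` under the group generated by the involutions `𝔢_k` and `𝔪`. -/
def gammaOrbit {k : ℕ} (m : PairPartition k) (v : ℕ) : Set ℕ :=
  MulAction.orbit (Subgroup.closure {(triv k).perm, m.perm} : Subgroup (Equiv.Perm ℕ)) v

/-- The charge function of `Γ(𝔪)`: `charge m v` holds iff `v` receives charge `+`,
i.e. iff `v` is at even distance (in `Γ(𝔪)`) from the largest label of its cycle.
The vertices at even distance from the largest label `M` of a cycle are exactly the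
orbit of `M` under the cyclic group generated by `𝔪 ∘ 𝔢_k`. -/
def charge {k : ℕ} (m : PairPartition k) (v : ℕ) : Prop :=
  v ∈ MulAction.orbit (Subgroup.zpowers (m.perm * (triv k).perm) : Subgroup (Equiv.Perm ℕ))
        (sSup (gammaOrbit m v))

/-- The weight `ω^(b)(𝔪, (i j)·𝔪)` attached to the transposition `(i j)` acting on `𝔪`:
it is `1` if the charges of `i` and `j` in `Γ(𝔪)` agree, and `b` otherwise. -/
noncomputable def omegab {R : Type*} [CommRing R] (b : R) {k : ℕ}
    (m : PairPartition k) (i j : ℕ) : R :=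
  if (charge m i ↔ charge m j) then 1 else b

/-- The number of cycles of `Γ(𝔪)` of length `2ℓ`, i.e. the multiplicity of `ℓ`
in the coset-type `λ(𝔪)` of `𝔪`. -/
noncomputable def cycleCount {k : ℕ} (m : PairPartition k) (ℓ : ℕ) : ℕ :=
  (((Finset.Icc 1 (2 * k)).filter fun a => (gammaOrbit m a).ncard = 2 * ℓ).card) / (2 * ℓ)

/-- Two pair partitions have the same coset-type iff `Γ(𝔪)` and `Γ(𝔪')` have the same
number of cycles of every length. -/
def SameCosetType {k : ℕ} (m m' : PairPartition k) : Prop :=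
  ∀ ℓ : ℕ, cycleCount m ℓ = cycleCount m' ℓ

/-- The pair partition `𝔪` has coset-type the multiset `μ` (a partition of `k`,
presented as the multiset of its parts). -/
def HasCosetType {k : ℕ} (m : PairPartition k) (μ : Multiset ℕ) : Prop :=
  ∀ ℓ : ℕ, 1 ≤ ℓ → μ.count ℓ = cycleCount m ℓ

/-- All lists of length `n` with entries in the finset `S`. -/
def listsLen (S : Finset (ℕ × ℕ)) : ℕ → Finset (List (ℕ × ℕ))
  | 0 => {[]}
  | n + 1 => (S ×ˢ listsLen S n).image fun p => p.1 :: p.2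

/-- Apply a sequence `τ = (τ_1, …, τ_r)` of transpositions (each encoded as a pair)
to a pair partition, the rightmost transposition acting first:
`τ_1 ∘ τ_2 ∘ ⋯ ∘ τ_r · 𝔪`. -/
def applyFacts {k : ℕ} (l : List (ℕ × ℕ)) (m : PairPartition k) : PairPartition k :=
  l.foldr (fun t acc => swapAct t.1 t.2 acc) m

/-- `l` is a monotone factorisation of the pair partition `𝔪 ∈ 𝒫_k`: a sequence of
transpositions `(a_s b_s)` with `a_s < b_s`, all `b_s` odd, `b_1 ≤ b_2 ≤ ⋯ ≤ b_r`,
and `τ_1 ∘ ⋯ ∘ τ_r · 𝔪 = 𝔢_k`. -/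
def IsMonoFact {k : ℕ} (m : PairPartition k) (l : List (ℕ × ℕ)) : Prop :=
  (∀ t ∈ l, 1 ≤ t.1 ∧ t.1 < t.2 ∧ t.2 ≤ 2 * k ∧ Odd t.2) ∧
  List.Pairwise (· ≤ ·) (l.map Prod.snd) ∧
  applyFacts l m = triv k

/-- The hive number of a monotone factorisation: the number of distinct values among
`b_1, …, b_r`. -/
def hive (l : List (ℕ × ℕ)) : ℕ := (l.map Prod.snd).toFinset.card

/-- The flip number of a monotone factorisation `τ` of `𝔪`: the number of indices `s`
with `ω^(b)(𝔪^(s), τ_s · 𝔪^(s)) = b`, where `𝔪^(s) = τ_{s+1} ∘ ⋯ ∘ τ_r · 𝔪`. -/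
noncomputable def flip {k : ℕ} (m : PairPartition k) : List (ℕ × ℕ) → ℕ
  | [] => 0
  | t :: rest =>
      (if (charge (applyFacts rest m) t.1 ↔ charge (applyFacts rest m) t.2) then 0 else 1)
        + flip m rest

/-- The finset of monotone factorisations of `𝔪 ∈ 𝒫_k` of length `r`. -/
noncomputable def monoFinset {k : ℕ} (m : PairPartition k) (r : ℕ) : Finset (List (ℕ × ℕ)) :=
  (listsLen ((Finset.Icc 1 (2 * k)) ×ˢ (Finset.Icc 1 (2 * k))) r).filter fun l => IsMonoFact m l

/-- A sequence of transpositions is connected (relative to level `k`) if together with the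
involution `ι = (1 2)(3 4)⋯(2k-1 2k)` it generates a subgroup acting transitively on
`{1, …, 2k}`. -/
def IsConnectedFact (k : ℕ) (l : List (ℕ × ℕ)) : Prop :=
  ∀ a ∈ Finset.Icc 1 (2 * k), ∀ b ∈ Finset.Icc 1 (2 * k),
    ∃ σ ∈ Subgroup.closure
        ({(triv k).perm} ∪ {p : Equiv.Perm ℕ | ∃ t ∈ l, p = Equiv.swap t.1 t.2}),
      σ a = b

end PairPartition


noncomputable instance matrixMeasurableSpace {N : ℕ} :
    MeasurableSpace (Matrix (Fin N) (Fin N) ℝ) :=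
  inferInstanceAs (MeasurableSpace (Fin N → Fin N → ℝ))

/-- The compact group `O(N)` of real orthogonal `N × N` matrices. -/
abbrev OrthGroup (N : ℕ) := Matrix.orthogonalGroup (Fin N) ℝ

noncomputable instance orthMeasurableSpace {N : ℕ} : MeasurableSpace (OrthGroup N) :=
  borel _

/-- The diagonal matrix `I_{M,N}` whose first `M` diagonal entries are `1` and whose
remaining entries are `0`. -/
def IMN (N M : ℕ) : Matrix (Fin N) (Fin N) ℝ :=
  Matrix.diagonal fun p => if (p : ℕ) < M then (1 : ℝ) else 0

/-- The map `O ↦ O · I_{M,N} · Oᵀ` from `O(N)` onto the space `A(M,N)` of idempotent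
real symmetric `N × N` matrices of rank `M`. -/
def grassMap (N M : ℕ) (O : OrthGroup N) : Matrix (Fin N) (Fin N) ℝ :=
  (O : Matrix (Fin N) (Fin N) ℝ) * IMN N M * Matrix.transpose (O : Matrix (Fin N) (Fin N) ℝ)


/-- The product `A_{i(1)i(2)} A_{i(3)i(4)} ⋯ A_{i(2k-1)i(2k)}` of matrix entries. -/
def prodEntries {N : ℕ} (k : ℕ) (i : ℕ → Fin N) (A : Matrix (Fin N) (Fin N) ℝ) : ℝ :=
  ∏ a ∈ Finset.range k, A (i (2 * a + 1)) (i (2 * a + 2))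



open PairPartition


/-- A step in the (`b`- or `bt`-) Weingarten graph: a type-A edge `𝔪 → (i 2k-1)·𝔪`,
a type-B edge `𝔪 → 𝔪↓`, or a type-C edge `𝔪 → ((i 2k-1)·𝔪)↓`. -/
inductive WStep where
  | A (i : ℕ) : WStep
  | B : WStep
  | C (i : ℕ) : WStep
deriving DecidableEq

/-- `IsPathTo k 𝔪 ρ` holds iff `ρ` is a path in the `bt`-Weingarten graph from the
pair partition `𝔪 ∈ 𝒫_k` to the empty pair partition. -/
def IsPathTo : (k : ℕ) → PairPartition k → List WStep → Prop
  | 0, _, [] => True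
  | _ + 1, _, [] => False
  | 0, _, _ :: _ => False
  | k + 1, m, WStep.A i :: ρ =>
      1 ≤ i ∧ i ≤ 2 * (k + 1) - 2 ∧ IsPathTo (k + 1) (swapAct i (2 * (k + 1) - 1) m) ρ
  | k + 1, m, WStep.B :: ρ =>
      m.f (2 * (k + 1) - 1) = 2 * (k + 1) ∧ IsPathTo k (down m) ρ
  | k + 1, m, WStep.C i :: ρ =>
      1 ≤ i ∧ i ≤ 2 * (k + 1) - 2 ∧ m.f i = 2 * (k + 1) ∧
        IsPathTo k (down (swapAct i (2 * (k + 1) - 1) m)) ρ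

/-- The product of the `b`-dependent edge weights along a path. -/
noncomputable def pathWeight {R : Type*} [CommRing R] (b : R) :
    (k : ℕ) → PairPartition k → List WStep → R
  | _, _, [] => 1
  | 0, _, _ :: _ => 1
  | k + 1, m, WStep.A i :: ρ =>
      omegab b m i (2 * (k + 1) - 1) * pathWeight b (k + 1) (swapAct i (2 * (k + 1) - 1) m) ρ
  | k + 1, m, WStep.B :: ρ => pathWeight b k (down m) ρ
  | k + 1, m, WStep.C i :: ρ => pathWeight b k (down (swapAct i (2 * (k + 1) - 1) m)) ρ

/-- The number of type-A edges of a path. -/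
def countA (l : List WStep) : ℕ :=
  (l.filter fun s => match s with | WStep.A _ => true | _ => false).length

/-- The number of type-B edges of a path. -/
def countB (l : List WStep) : ℕ :=
  (l.filter fun s => match s with | WStep.B => true | _ => false).length

/-- The number of type-C edges of a path. -/
def countC (l : List WStep) : ℕ :=
  (l.filter fun s => match s with | WStep.C _ => true | _ => false).length

/-- The `b`-Weingarten function `Wg^(b)(𝔪) ∈ ℤ[b]⟦X⟧`: the coefficient of `X^n` is the
sum of `(-1)^{ℓ_A(ρ)} w(ρ)` over all paths `ρ` (with no type-C edges, i.e. paths in the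
`b`-Weingarten graph) from `𝔪` to the empty pair partition with `ℓ_A(ρ) + ℓ_B(ρ) = n`.
Here `b` is the polynomial variable of `ℤ[b]`. -/
noncomputable def WgB (k : ℕ) (m : PairPartition k) : PowerSeries (Polynomial ℤ) :=
  PowerSeries.mk fun n =>
    ∑ᶠ (ρ : List WStep)
      (_ : IsPathTo k m ρ ∧ (∀ i, WStep.C i ∉ ρ) ∧ countA ρ + countB ρ = n),
      (-1 : Polynomial ℤ) ^ countA ρ * pathWeight (Polynomial.X : Polynomial ℤ) k m ρ

/-- The `bt`-Weingarten function `Wg^(bt)(𝔪) ∈ (ℤ[b,y])⟦X⟧`: the coefficient of `X^n` is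
the sum of `(-1)^{ℓ_A(ρ)} y^{ℓ_B(ρ)} w(ρ)` over all paths `ρ` in the `bt`-Weingarten graph
from `𝔪` to the empty pair partition with `ℓ_A(ρ) + ℓ_C(ρ) = n`.  Here `b = X 0` and
`y = X 1` in `ℤ[b,y] = MvPolynomial (Fin 2) ℤ`. -/
noncomputable def WgBT (k : ℕ) (m : PairPartition k) :
    PowerSeries (MvPolynomial (Fin 2) ℤ) :=
  PowerSeries.mk fun n =>
    ∑ᶠ (ρ : List WStep) (_ : IsPathTo k m ρ ∧ countA ρ + countC ρ = n),
      (-1 : MvPolynomial (Fin 2) ℤ) ^ countA ρ * (MvPolynomial.X 1) ^ countB ρ *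
        pathWeight (MvPolynomial.X 0 : MvPolynomial (Fin 2) ℤ) k m ρ

/-- The standard basis vector `𝔪` of the free module with basis `𝒫_k`,
realised as functions `𝒫_k → R`. -/
noncomputable def basisVec {R : Type*} [CommRing R] (k : ℕ) (m : PairPartition k) :
    PairPartition k → R :=
  fun n => if n = m then 1 else 0

/-- The `b`-deformed Jucys–Murphy operator `𝒥_i` acting on the free module with basis
`𝒫_k` (realised as functions `𝒫_k → R`): on basis vectors,
`𝒥_i(𝔪) = ∑_{a=1}^{2i-2} ω^(b)((a 2i-1)·𝔪, 𝔪) · (a 2i-1)·𝔪`. -/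
noncomputable def JbOp {R : Type*} [CommRing R] (b : R) {k : ℕ} (i : ℕ)
    (v : PairPartition k → R) : PairPartition k → R :=
  fun n => ∑ a ∈ Finset.Icc 1 (2 * i - 2),
    omegab b n a (2 * i - 1) * v (swapAct a (2 * i - 1) n)

/-- The (odd) Jucys–Murphy element `J_{2i-1} = ∑_{a=1}^{2i-2} (a
 2i-1)` of the group
algebra of `S_{2k}`, acting on the free module with basis `𝒫_k` via the linear extension
of the `S_{2k}`-action on pair partitions. -/
noncomputable def JoddOp {R : Type*} [CommRing R] {k : ℕ} (i : ℕ)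
    (v : PairPartition k → R) : PairPartition k → R :=
  fun n => ∑ a ∈ Finset.Icc 1 (2 * i - 2), v (swapAct a (2 * i - 1) n)

/-- The vector `𝔭_μ = ∑_{𝔪 : λ(𝔪) = μ} 𝔪`, i.e. the indicator function of the set of
pair partitions of coset-type `μ`. -/
noncomputable def pVec {R : Type*} [CommRing R] (k : ℕ) (μ : Multiset ℕ) :
    PairPartition k → R :=
  fun m => if HasCosetType m μ then 1 else 0

noncomputable def applyPows {R : Type*} [CommRing R] (b : R) {k : ℕ} :
    List (ℕ × ℕ) → (PairPartition k → R) → (PairPartition k → R)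
  | [], v => v
  | ia :: rest, v => (JbOp b ia.1)^[ia.2] (applyPows b rest v)


/-- The coefficient ring `ℤ[b,y]⟦X⟧`, with `b = X 0` and `y = X 1`. -/
abbrev SeriesRing := PowerSeries (MvPolynomial (Fin 2) ℤ)

noncomputable def bS : SeriesRing := PowerSeries.C (MvPolynomial.X 0)
noncomputable def yS : SeriesRing := PowerSeries.C (MvPolynomial.X 1)

/-- The operator-valued power series `(1 + X·𝒥_i)⁻¹ = ∑_{j ≥ 0} (-X)^j 𝒥_i^j`
applied to a vector `v`, computed coefficientwise. -/
noncomputable def invApply (k : ℕ) (i : ℕ) (v : PairPartition k → SeriesRing) :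
    PairPartition k → SeriesRing :=
  fun n => PowerSeries.mk fun d =>
    ∑ᶠ j : ℕ, PowerSeries.coeff d
      ((-(PowerSeries.X : SeriesRing)) ^ j * ((JbOp bS i)^[j] v) n)

/-- The vector `(y + X𝒥_j)(1 + X𝒥_j)⁻¹ ⋯ (y + X𝒥_1)(1 + X𝒥_1)⁻¹ (𝔢_k)`. -/
noncomputable def prodVec (k : ℕ) : ℕ → (PairPartition k → SeriesRing)
  | 0 => fun n => if n = triv k then 1 else 0
  | j + 1 => fun n =>
      yS * invApply k (j + 1) (prodVec k j) n +
        PowerSeries.X * (JbOp bS (j + 1) (invApply k (j + 1) (prodVec k j))) n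


open MvPolynomial

/-- The formal partial derivative `∂_n = ∂/∂p_n` on the polynomial ring
`K[p_1, p_2, …]` (the variables being indexed by positive naturals);
junk value `0` for `n = 0`. -/
noncomputable def pd (K : Type*) [CommRing K] (n : ℕ) :
    MvPolynomial ℕ+ K →ₗ[K] MvPolynomial ℕ+ K :=
  if h : 0 < n then (pderiv (⟨n, h⟩ : ℕ+)).toLinearMap else 0

/-- The variable `p_n` of `K[p_1, p_2, …]`; junk value `0` for `n = 0`. -/
noncomputable def pvar (K : Type*) [CommRing K] (n : ℕ) : MvPolynomial ℕ+ K :=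
  if h : 0 < n then X ⟨n, h⟩ else 0

section SumOp

variable (K : Type*) [CommRing K]

lemma sumOp_support_subset (m : ℕ) (f : MvPolynomial ℕ+ K) :
    (Function.support fun i => ((i + m : ℕ) : K) • (pvar K i * pd K (i + m) f)) ⊆
      ((fun i => i + m) ⁻¹' ↑(f.vars.image (fun v : ℕ+ => (v : ℕ)))) := by
  intro i hi
  simp only [Function.mem_support] at hi
  by_contra hmem
  apply hi
  rcases Nat.eq_zero_or_pos (i + m) with h0 | h0
  · have hi0 : i = 0 := by omega
    subst hi0
    simp [pvar]
  · have hnot : (⟨i + m, h0⟩ : ℕ+) ∉ f.vars := by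
      intro hv
      apply hmem
      simp only [Set.mem_preimage, Finset.coe_image, Set.mem_image, Finset.mem_coe]
      exact ⟨⟨i + m, h0⟩, hv, rfl⟩
    have hz : pd K (i + m) f = 0 := by
      have hpd : pd K (i + m) = (pderiv (⟨i + m, h0⟩ : ℕ+)).toLinearMap := dif_pos h0
      rw [hpd]
      have := pderiv_eq_zero_of_notMem_vars (R := K) hnot
      exact this
    rw [hz, mul_zero, smul_zero]

lemma sumOp_support_finite (m : ℕ) (f : MvPolynomial ℕ+ K) :
    (Function.support fun i => ((i + m : ℕ) : K) • (pvar K i * pd K (i + m) f)).Finite := by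
  apply Set.Finite.subset _ (sumOp_support_subset K m f)
  apply Set.Finite.preimage
  · exact (add_left_injective m).injOn
  · exact (f.vars.image (fun v : ℕ+ => (v : ℕ))).finite_toSet

/-- The operator `∑_{i ≥ 1} (i+m) p_i ∂_{i+m}` on `K[p_1, p_2, …]`
(a well-defined linear operator, the sum being locally finite on polynomials). -/
noncomputable def sumOp (m : ℕ) : MvPolynomial ℕ+ K →ₗ[K] MvPolynomial ℕ+ K where
  toFun f := ∑ᶠ i : ℕ, ((i + m : ℕ) : K) • (pvar K i * pd K (i + m) f)
  map_add' x y := by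
    have key : ∀ i : ℕ, ((i + m : ℕ) : K) • (pvar K i * pd K (i + m) (x + y)) =
        ((i + m : ℕ) : K) • (pvar K i * pd K (i + m) x) +
          ((i + m : ℕ) : K) • (pvar K i * pd K (i + m) y) := by
      intro i
      rw [map_add, mul_add, smul_add]
    try dsimp only
    rw [finsum_congr key]
    exact finsum_add_distrib (sumOp_support_finite K m x) (sumOp_support_finite K m y)
  map_smul' c x := by
    have key : ∀ i : ℕ, ((i + m : ℕ) : K) • (pvar K i * pd K (i + m) (c • x)) =
        c • (((i + m : ℕ) : K) • (pvar K i * pd K (i + m) x)) := by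
      intro i
      rw [_root_.map_smul, smul_comm]
      congr 1
      rw [mul_smul_comm]
    try dsimp only
    rw [finsum_congr key]
    simp only [RingHom.id_apply]
    exact (smul_finsum' c (sumOp_support_finite K m x)).symm
end SumOp

/-- The `bt`-deformed Virasoro-type operator `L_m` of Theorem 3.5/4.7, acting on the
polynomial ring `K[p_1, p_2, …]`. -/
noncomputable def Lop (K : Type*) [CommRing K] (b t z hbar : K) (m : ℕ) :
    MvPolynomial ℕ+ K →ₗ[K] MvPolynomial ℕ+ K :=
  (((m : K) * Ring.inverse hbar) • pd K m)
    - (1 + b) • (∑ i ∈ Finset.Ioo 0 m,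
        (((i : ℕ) : K) * (((m - i : ℕ)) : K)) • (pd K i ∘ₗ pd K (m - i)))
    - sumOp K m
    - ((b * (m : K) * ((m - 1 : ℕ) : K)) • pd K m)
    - ((z * Ring.inverse hbar * (t - 1) * ((m - 1 : ℕ) : K)) • pd K (m - 1))
    - (if m = 1 then (z * Ring.inverse hbar * Ring.inverse hbar * Ring.inverse (1 + b)) •
        (LinearMap.id : MvPolynomial ℕ+ K →ₗ[K] MvPolynomial ℕ+ K) else 0)
open PairPartition

/-- `i : {1,…,2k} → {1,…,N}` is admissible for `𝔪`: `{a,b} ∈ 𝔪` implies `i a = i b`. -/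
def Admissible {N : ℕ} (k : ℕ) (m : PairPartition k) (i : ℕ → Fin N) : Prop :=
  ∀ a, 1 ≤ a → a ≤ 2 * k → i (m.f a) = i a

/-- `i : {1,…,2k} → {1,…,N}` is strongly admissible for `𝔪`:
for `a, b ∈ {1,…,2k}`, `i a = i b` holds iff `a = b` or `{a,b} ∈ 𝔪`. -/
def StronglyAdmissible {N : ℕ} (k : ℕ) (m : PairPartition k) (i : ℕ → Fin N) : Prop :=
  ∀ a b, 1 ≤ a → a ≤ 2 * k → 1 ≤ b → b ≤ 2 * k → (i a = i b ↔ (a = b ∨ m.f a = b))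

/-- `ĥ^{(t)}_r(𝔪)` evaluated at a real number `t`: the weighted count
`∑_{τ ∈ Mono(𝔪), ℓ(τ) = r} t^{hive(τ)}`. -/
noncomputable def hiveSum {k : ℕ} (m : PairPartition k) (r : ℕ) (t : ℝ) : ℝ :=
  ∑ l ∈ monoFinset m r, t ^ hive l

/-- The `bt`-monotone count `∑_{τ ∈ Mono(𝔪), ℓ(τ) = r} b^{flip(τ)} t^{hive(τ)}`
in `ℤ[b,t]`, with `b = X 0` and `t = X 1`. -/
noncomputable def btSum {k : ℕ} (m : PairPartition k) (r : ℕ) : MvPolynomial (Fin 2) ℤ :=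
  ∑ l ∈ monoFinset m r,
    (MvPolynomial.X 0 : MvPolynomial (Fin 2) ℤ) ^ (flip m l) *
      (MvPolynomial.X 1) ^ (hive l)

/-- The connected `bt`-monotone count
`∑_{τ ∈ CMono(𝔪), ℓ(τ) = r} b^{flip(τ)} t^{hive(τ)}` in `ℚ[b,t]`,
with `b = X 0` and `t = X 1`. -/
noncomputable def cMonoSum {k : ℕ} (m : PairPartition k) (r : ℕ) : MvPolynomial (Fin 2) ℚ :=
  ∑ l ∈ (monoFinset m r).filter (fun l => IsConnectedFact k l),
    (MvPolynomial.X 0 : MvPolynomial (Fin 2) ℚ) ^ (flip m l) *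
      (MvPolynomial.X 1) ^ (hive l)

/-- The operator `c + J_{2i-1}` on the free module with basis `𝒫_k`. -/
noncomputable def affJoddOp {k : ℕ} (c : ℝ) (i : ℕ) (v : PairPartition k → ℝ) :
    PairPartition k → ℝ :=
  fun n => c * v n + JoddOp i v n



open scoped Classical

namespace PairPartition
variable {k : ℕ}

lemma f_mem (m : PairPartition k) {a : ℕ} (h1 : 1 ≤ a) (h2 : a ≤ 2*k) :
    1 ≤ m.f a ∧ m.f a ≤ 2*k := by
  by_cases h : m.f a = a
  · rw [h]; exact ⟨h1, h2⟩
  · by_contra hc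
    have h3 : ¬ (m.f (m.f a) ≠ m.f a) := by rw [m.moves]; omega
    push_neg at h3; rw [m.invol] at h3; exact h h3.symm

lemma f_zero (m : PairPartition k) : m.f 0 = 0 := by
  by_contra h
  have := (m.moves 0).mp h; omega

lemma f_high (m : PairPartition k) {a : ℕ} (h : 2*k < a) : m.f a = a := by
  by_contra h'
  have := (m.moves a).mp h'; omega

lemma swapAct_f (m : PairPartition k) {i j : ℕ}
    (h : 1 ≤ i ∧ i ≤ 2 * k ∧ 1 ≤ j ∧ j ≤ 2 * k) (a : ℕ) :
    (swapAct i j m).f a = Equiv.swap i j (m.f (Equiv.swap i j a)) := by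
  rw [swapAct, dif_pos h]

lemma trivFun_left (hk : 1 ≤ k) : trivFun k (2*k-1) = 2*k := by
  unfold trivFun; split_ifs <;> omega

lemma trivFun_right (hk : 1 ≤ k) : trivFun k (2*k) = 2*k-1 := by
  unfold trivFun; split_ifs <;> omega

lemma triv_f : (triv k).f = trivFun k := rfl

lemma down_f (m : PairPartition k) (h : m.f (2 * k - 1) = 2 * k) (a : ℕ) :
    (down m).f a = if a = 2 * k - 1 ∨ a = 2 * k then a else m.f a := by
  rw [down, dif_pos h]

lemma down_triv (hk : 1 ≤ k) : down (triv k) = triv (k - 1) := by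
  apply ext'
  funext a
  rw [down_f _ (trivFun_left hk)]
  show (if a = 2*k-1 ∨ a = 2*k then a else trivFun k a) = trivFun (k-1) a
  unfold trivFun
  split_ifs <;> omega

lemma eq_triv_iff (hk : 1 ≤ k) (m : PairPartition k) :
    m = triv k ↔ (m.f (2*k-1) = 2*k ∧ down m = triv (k-1)) := by
  constructor
  · rintro rfl
    exact ⟨trivFun_left hk, down_triv hk⟩
  · rintro ⟨h1, h2⟩
    apply ext'
    funext a
    show m.f a = trivFun k a
    rcases eq_or_ne a (2*k-1) with rfl | ha1
    · rw [h1, trivFun_left hk]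
    rcases eq_or_ne a (2*k) with rfl | ha2
    · have : m.f (2*k) = 2*k-1 := by
        conv_lhs => rw [← h1]
        rw [m.invol]
      rw [this, trivFun_right hk]
    · have hd : (down m).f a = m.f a := by
        rw [down_f m h1, if_neg (not_or.mpr ⟨ha1, ha2⟩)]
      have : (down m).f a = trivFun (k-1) a := by rw [h2]; rfl
      rw [hd] at this
      rw [this]
      unfold trivFun
      split_ifs <;> omega

lemma swap_fix_high {i j a : ℕ} (hi : i ≤ 2*k-2) (hj : j ≤ 2*k-2)
    (ha : a = 2*k-1 ∨ a = 2*k) (hk : 1 ≤ k) : Equiv.swap i j a = a := by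
  apply Equiv.swap_apply_of_ne_of_ne <;> omega

lemma swapAct_top_pair (m : PairPartition k) {i j : ℕ} (hk : 1 ≤ k)
    (hi1 : 1 ≤ i) (hi : i ≤ 2*k-2) (hj1 : 1 ≤ j) (hj : j ≤ 2*k-2) :
    ((swapAct i j m).f (2*k-1) = 2*k) ↔ (m.f (2*k-1) = 2*k) := by
  have hv : 1 ≤ i ∧ i ≤ 2 * k ∧ 1 ≤ j ∧ j ≤ 2 * k := by omega
  rw [swapAct_f m hv]
  rw [swap_fix_high hi hj (Or.inl rfl) hk]
  constructor
  · intro h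
    have := congrArg (Equiv.swap i j) h
    rw [Equiv.swap_apply_self, swap_fix_high hi hj (Or.inr rfl) hk] at this
    exact this
  · intro h; rw [h, swap_fix_high hi hj (Or.inr rfl) hk]

lemma swapAct_top_eq (m : PairPartition k) {i : ℕ} (hk : 1 ≤ k)
    (hi1 : 1 ≤ i) (hi : i ≤ 2*k-2) :
    ((swapAct i (2*k-1) m).f (2*k-1) = 2*k) ↔ (m.f i = 2*k) := by
  have hv : 1 ≤ i ∧ i ≤ 2 * k ∧ 1 ≤ 2*k-1 ∧ 2*k-1 ≤ 2 * k := by omega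
  rw [swapAct_f m hv, Equiv.swap_apply_right]
  have h2k : Equiv.swap i (2*k-1) (2*k) = 2*k := by
    apply Equiv.swap_apply_of_ne_of_ne <;> omega
  constructor
  · intro h
    have := congrArg (Equiv.swap i (2*k-1)) h
    rw [Equiv.swap_apply_self, h2k] at this
    exact this
  · intro h; rw [h, h2k]

lemma down_swapAct (m : PairPartition k) {i j : ℕ} (hk : 1 ≤ k)
    (h : m.f (2*k-1) = 2*k)
    (hi1 : 1 ≤ i) (hi : i ≤ 2*k-2) (hj1 : 1 ≤ j) (hj : j ≤ 2*k-2) :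
    down (swapAct i j m) = swapAct i j (down m) := by
  have hv : 1 ≤ i ∧ i ≤ 2 * k ∧ 1 ≤ j ∧ j ≤ 2 * k := by omega
  have hv' : 1 ≤ i ∧ i ≤ 2 * (k-1) ∧ 1 ≤ j ∧ j ≤ 2 * (k-1) := by omega
  have hs : (swapAct i j m).f (2*k-1) = 2*k := (swapAct_top_pair m hk hi1 hi hj1 hj).mpr h
  apply ext'
  funext a
  rw [down_f _ hs, swapAct_f m hv]
  rw [show (swapAct i j (down m)).f a = Equiv.swap i j ((down m).f (Equiv.swap i j a)) from
    swapAct_f (down m) hv' a]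
  by_cases ha : a = 2*k-1 ∨ a = 2*k
  · rw [if_pos ha, swap_fix_high hi hj ha hk,
      down_f _ h, if_pos ha, swap_fix_high hi hj ha hk]
  · rw [if_neg ha]
    have hsa : ¬ (Equiv.swap i j a = 2*k-1 ∨ Equiv.swap i j a = 2*k) := by
      intro hc
      apply ha
      rcases hc with hc | hc
      · left
        have := congrArg (Equiv.swap i j) hc
        rw [Equiv.swap_apply_self, swap_fix_high hi hj (Or.inl rfl) hk] at this
        exact this
      · right
        have := congrArg (Equiv.swap i j) hc
        rw [Equiv.swap_apply_self, swap_fix_high hi hj (Or.inr rfl) hk] at this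
        exact this
    rw [down_f _ h, if_neg hsa]

end PairPartition


open scoped Classical
open MulAction

namespace PairPartition

/-- Workhorse 1: invariance of a set under a closure subgroup. -/
lemma closure_inv {G : Set (Equiv.Perm ℕ)} {S : Set ℕ}
    (hG : ∀ g ∈ G, ∀ x, x ∈ S ↔ g x ∈ S) {σ : Equiv.Perm ℕ}
    (hσ : σ ∈ Subgroup.closure G) : ∀ x, x ∈ S ↔ σ x ∈ S := by
  induction hσ using Subgroup.closure_induction with
  | mem g hg => exact hG g hg
  | one => simp
  | mul σ τ hσ hτ Pσ Pτ =>
      intro x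
      rw [Equiv.Perm.mul_apply]
      exact (Pτ x).trans (Pσ (τ x))
  | inv σ hσ Pσ =>
      intro x
      have := Pσ (σ⁻¹ x)
      rw [Equiv.Perm.inv_def, Equiv.apply_symm_apply] at this
      exact this.symm

/-- Workhorse 2: orbit transfer between closures of generating sets agreeing on
an invariant set. -/
lemma orbit_closure_subset {G H : Set (Equiv.Perm ℕ)} {S : Set ℕ}
    (hG : ∀ g ∈ G, ∀ x, x ∈ S ↔ g x ∈ S)
    (hGH : ∀ g ∈ G, ∃ h ∈ Subgroup.closure H, ∀ x ∈ S, g x = h x)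
    {v : ℕ} (hv : v ∈ S) :
    orbit (Subgroup.closure G) v ⊆ orbit (Subgroup.closure H) v := by
  have key : ∀ σ : Equiv.Perm ℕ, σ ∈ Subgroup.closure G →
      ∀ x ∈ S, ∃ h ∈ Subgroup.closure H, σ x = h x := by
    intro σ hσ
    induction hσ using Subgroup.closure_induction with
    | mem g hg => intro x _; obtain ⟨h, hh, hgh⟩ := hGH g hg; exact ⟨h, hh, hgh x ‹x ∈ S›⟩
    | one => intro x _; exact ⟨1, one_mem _, rfl⟩
    | mul σ τ hσ hτ Pσ Pτ =>
        intro x hx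
        obtain ⟨hτ', hhτ', hxτ⟩ := Pτ x hx
        have hτx : τ x ∈ S := (closure_inv hG hτ x).mp hx
        obtain ⟨hσ', hhσ', hxσ⟩ := Pσ (τ x) hτx
        refine ⟨hσ' * hτ', mul_mem hhσ' hhτ', ?_⟩
        rw [Equiv.Perm.mul_apply, Equiv.Perm.mul_apply, hxσ, hxτ]
    | inv σ hσ Pσ =>
        intro x hx
        have hix : σ⁻¹ x ∈ S := by
          have := closure_inv hG (inv_mem hσ) x
          exact this.mp hx
        obtain ⟨h, hh, hxh⟩ := Pσ (σ⁻¹ x) hix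
        rw [Equiv.Perm.inv_def, Equiv.apply_symm_apply] at hxh
        refine ⟨h⁻¹, inv_mem hh, ?_⟩
        have : h⁻¹ x = σ⁻¹ x := by
          conv_lhs => rw [hxh]
          rw [Equiv.Perm.inv_def, Equiv.symm_apply_apply, Equiv.Perm.inv_def]
        exact this.symm
  rintro w ⟨⟨σ, hσ⟩, rfl⟩
  obtain ⟨h, hh, hxh⟩ := key σ hσ v hv
  refine ⟨⟨h, hh⟩, ?_⟩
  show h • v = σ • v
  rw [Equiv.Perm.smul_def, Equiv.Perm.smul_def, hxh]

end PairPartition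

namespace PairPartition

open Subgroup

lemma mem_orbit_zpowers_iff (σ : Equiv.Perm ℕ) (s x : ℕ) :
    σ x ∈ orbit (Subgroup.zpowers σ) s ↔ x ∈ orbit (Subgroup.zpowers σ) s := by
  constructor
  · rintro ⟨⟨τ, hτ⟩, h⟩
    simp only [Subgroup.mk_smul, Equiv.Perm.smul_def] at h
    refine ⟨⟨σ⁻¹ * τ, mul_mem (inv_mem (Subgroup.mem_zpowers σ)) hτ⟩, ?_⟩
    simp only [Subgroup.mk_smul, Equiv.Perm.smul_def, Equiv.Perm.mul_apply, h,
      Equiv.Perm.inv_def, Equiv.symm_apply_apply]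
  · rintro ⟨⟨τ, hτ⟩, h⟩
    simp only [Subgroup.mk_smul, Equiv.Perm.smul_def] at h
    refine ⟨⟨σ * τ, mul_mem (Subgroup.mem_zpowers σ) hτ⟩, ?_⟩
    simp only [Subgroup.mk_smul, Equiv.Perm.smul_def, Equiv.Perm.mul_apply, h]

lemma charge_sigma {k : ℕ} (m : PairPartition k) (v : ℕ) :
    charge m ((m.perm * (triv k).perm) v) ↔ charge m v := by
  set σ := m.perm * (triv k).perm with hσdef
  have hmem : σ ∈ Subgroup.closure {(triv k).perm, m.perm} :=
    mul_mem (Subgroup.subset_closure (by simp)) (Subgroup.subset_closure (by simp))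
  have horb : gammaOrbit m (σ v) = gammaOrbit m v := by
    unfold gammaOrbit
    have hv : σ v = (⟨σ, hmem⟩ : Subgroup.closure {(triv k).perm, m.perm}) • v := rfl
    rw [hv, MulAction.orbit_smul]
  unfold charge
  rw [horb]
  exact mem_orbit_zpowers_iff σ _ v

lemma omegab_eq_one_of_pair {R : Type*} [CommRing R] (b : R) {k : ℕ} (hk : 1 ≤ k)
    (m : PairPartition k) {a : ℕ} (ha1 : 1 ≤ a) (ha : a ≤ 2*k-2) (hfa : m.f a = 2*k) :
    omegab b m a (2*k-1) = 1 := by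
  have hfk : m.f (2*k) = a := by
    conv_lhs => rw [← hfa]
    rw [m.invol]
  have hav : a = (m.perm * (triv k).perm) (2*k-1) := by
    show a = m.f ((triv k).f (2*k-1))
    rw [triv_f, trivFun_left hk, hfk]
  have hch : charge m a ↔ charge m (2*k-1) := by
    rw [hav]; exact charge_sigma m (2*k-1)
  unfold omegab
  rw [if_pos hch]

/-- Helper: an involution with `f (2k-1) = 2k` preserves the complement of
`{2k-1, 2k}`. -/
lemma invol_compl_iff {k : ℕ} (f : ℕ → ℕ) (hf : ∀ a, f (f a) = a)
    (h : f (2*k-1) = 2*k) (x : ℕ) :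
    (x ≠ 2*k-1 ∧ x ≠ 2*k) ↔ (f x ≠ 2*k-1 ∧ f x ≠ 2*k) := by
  have h2 : f (2*k) = 2*k-1 := by
    conv_lhs => rw [← h]
    rw [hf]
  constructor
  · rintro ⟨hx1, hx2⟩
    constructor
    · intro hc
      apply hx2
      have := congrArg f hc
      rw [hf, h] at this; exact this
    · intro hc
      apply hx1
      have := congrArg f hc
      rw [hf, h2] at this; exact this
  · rintro ⟨hx1, hx2⟩
    constructor
    · intro hc; apply hx2; rw [hc, h]
    · intro hc; apply hx1; rw [hc, h2]

end PairPartition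

namespace PairPartition

lemma charge_down {k : ℕ} (hk : 1 ≤ k) (m : PairPartition k)
    (hm : m.f (2*k-1) = 2*k) {x : ℕ} (hx : x ≤ 2*k-2) :
    charge m x ↔ charge (down m) x := by
  set S : Set ℕ := {n | n ≠ 2*k-1 ∧ n ≠ 2*k} with hSdef
  have hmemS : ∀ y : ℕ, y ∈ S ↔ (y ≠ 2*k-1 ∧ y ≠ 2*k) := fun y => Iff.rfl
  have htrivk : (triv k).f (2*k-1) = 2*k := trivFun_left hk
  have hxS : x ∈ S := by rw [hmemS]; omega
  -- invariance of S under the generators at level k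
  have hGinv : ∀ g ∈ ({(triv k).perm, m.perm} : Set (Equiv.Perm ℕ)),
      ∀ y, y ∈ S ↔ g y ∈ S := by
    rintro g hg y
    rcases hg with rfl | rfl
    · rw [hmemS, hmemS]
      exact invol_compl_iff (trivFun k) (triv k).invol htrivk y
    · rw [hmemS, hmemS]
      exact invol_compl_iff m.f m.invol hm y
  -- invariance of S under the generators at level k-1
  have hHinv : ∀ g ∈ ({(triv (k-1)).perm, (down m).perm} : Set (Equiv.Perm ℕ)),
      ∀ y, y ∈ S ↔ g y ∈ S := by
    rintro g hg y
    rcases hg with rfl | rfl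
    · rw [hmemS]
      show _ ↔ (trivFun (k-1) y ∈ S)
      rw [hmemS]
      unfold trivFun
      split_ifs <;> omega
    · by_cases hy : y = 2*k-1 ∨ y = 2*k
      · show y ∈ S ↔ (down m).f y ∈ S
        rw [down_f m hm, if_pos hy]
      · show y ∈ S ↔ (down m).f y ∈ S
        rw [down_f m hm, if_neg hy, hmemS, hmemS]
        exact invol_compl_iff m.f m.invol hm y
  -- agreement of generators on S
  have hagree_triv : ∀ y ∈ S, (triv k).perm y = (triv (k-1)).perm y := by
    intro y hy
    obtain ⟨h1, h2⟩ := (hmemS y).mp hy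
    show trivFun k y = trivFun (k-1) y
    unfold trivFun
    split_ifs <;> omega
  have hagree_m : ∀ y ∈ S, m.perm y = (down m).perm y := by
    intro y hy
    obtain ⟨h1, h2⟩ := (hmemS y).mp hy
    show m.f y = (down m).f y
    rw [down_f m hm, if_neg (not_or.mpr ⟨h1, h2⟩)]
  have hGH : ∀ g ∈ ({(triv k).perm, m.perm} : Set (Equiv.Perm ℕ)),
      ∃ h ∈ Subgroup.closure ({(triv (k-1)).perm, (down m).perm} : Set (Equiv.Perm ℕ)),
        ∀ y ∈ S, g y = h y := by
    rintro g (rfl | rfl)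
    · exact ⟨(triv (k-1)).perm, Subgroup.subset_closure (by simp), hagree_triv⟩
    · exact ⟨(down m).perm, Subgroup.subset_closure (by simp), hagree_m⟩
  have hHG : ∀ g ∈ ({(triv (k-1)).perm, (down m).perm} : Set (Equiv.Perm ℕ)),
      ∃ h ∈ Subgroup.closure ({(triv k).perm, m.perm} : Set (Equiv.Perm ℕ)),
        ∀ y ∈ S, g y = h y := by
    rintro g (rfl | rfl)
    · exact ⟨(triv k).perm, Subgroup.subset_closure (by simp),
        fun y hy => (hagree_triv y hy).symm⟩
    · exact ⟨m.perm, Subgroup.subset_closure (by simp),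
        fun y hy => (hagree_m y hy).symm⟩
  -- orbit equality
  have horb : gammaOrbit m x = gammaOrbit (down m) x :=
    Set.Subset.antisymm (orbit_closure_subset hGinv hGH hxS)
      (orbit_closure_subset hHinv hHG hxS)
  -- boundedness of the orbit
  have hG2 : ∀ g ∈ ({(triv k).perm, m.perm} : Set (Equiv.Perm ℕ)),
      ∀ y, y ∈ {n : ℕ | n ≤ 2*k} ↔ g y ∈ {n : ℕ | n ≤ 2*k} := by
    rintro g (rfl | rfl) y
    · show y ≤ 2*k ↔ trivFun k y ≤ 2*k
      unfold trivFun
      split_ifs <;> omega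
    · show y ≤ 2*k ↔ m.f y ≤ 2*k
      by_cases hy : y ≤ 2*k
      · simp only [hy, true_iff]
        rcases Nat.eq_zero_or_pos y with rfl | hy1
        · rw [f_zero]; omega
        · exact (f_mem m hy1 hy).2
      · rw [f_high m (by omega)]
  have horbsub : ∀ w ∈ gammaOrbit m x, w ≤ 2*k := by
    rintro w ⟨⟨σ, hσ⟩, rfl⟩
    show σ x ≤ 2*k
    exact (closure_inv hG2 hσ x).mp (by show x ≤ 2*k; omega)
  have horbS : ∀ w ∈ gammaOrbit m x, w ∈ S := by
    rintro w ⟨⟨σ, hσ⟩, rfl⟩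
    show σ x ∈ S
    exact (closure_inv hGinv hσ x).mp hxS
  have hne : (gammaOrbit m x).Nonempty := ⟨x, MulAction.mem_orbit_self x⟩
  have hbdd : BddAbove (gammaOrbit m x) := ⟨2*k, fun w hw => horbsub w hw⟩
  have hsmem : sSup (gammaOrbit m x) ∈ gammaOrbit m x := Nat.sSup_mem hne hbdd
  have hsS : sSup (gammaOrbit m x) ∈ S := horbS _ hsmem
  -- transfer of the zpowers orbits
  set s := sSup (gammaOrbit m x) with hsdef
  set σk := m.perm * (triv k).perm with hσkdef
  set σ' := (down m).perm * (triv (k-1)).perm with hσ'def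
  have hσkinv : ∀ g ∈ ({σk} : Set (Equiv.Perm ℕ)), ∀ y, y ∈ S ↔ g y ∈ S := by
    rintro g rfl y
    have h1 := hGinv (triv k).perm (by simp) y
    have h2 := hGinv m.perm (by simp) ((triv k).perm y)
    rw [hσkdef]
    exact h1.trans h2
  have hσ'inv : ∀ g ∈ ({σ'} : Set (Equiv.Perm ℕ)), ∀ y, y ∈ S ↔ g y ∈ S := by
    rintro g rfl y
    have h1 := hHinv (triv (k-1)).perm (by simp) y
    have h2 := hHinv (down m).perm (by simp) ((triv (k-1)).perm y)
    rw [hσ'def]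
    exact h1.trans h2
  have hσagree : ∀ y ∈ S, σk y = σ' y := by
    intro y hy
    have h1 : (triv k).perm y ∈ S := (hGinv (triv k).perm (by simp) y).mp hy
    rw [hσkdef, hσ'def]
    show m.perm ((triv k).perm y) = (down m).perm ((triv (k-1)).perm y)
    rw [← hagree_triv y hy]
    exact hagree_m _ h1
  have hzorb : MulAction.orbit (Subgroup.zpowers σk) s
      = MulAction.orbit (Subgroup.zpowers σ') s := by
    rw [Subgroup.zpowers_eq_closure, Subgroup.zpowers_eq_closure]
    apply Set.Subset.antisymm
    · exact orbit_closure_subset hσkinv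
        (by rintro g rfl
            exact ⟨σ', Subgroup.subset_closure rfl, hσagree⟩) hsS
    · exact orbit_closure_subset hσ'inv
        (by rintro g rfl
            exact ⟨σk, Subgroup.subset_closure rfl,
              fun y hy => (hσagree y hy).symm⟩) hsS
  unfold charge
  rw [← horb, ← hsdef, ← hσkdef, ← hσ'def, hzorb]

end PairPartition

namespace PairPartition

lemma omegab_down {R : Type*} [CommRing R] (b : R) {k : ℕ} (hk : 1 ≤ k)
    (m : PairPartition k) (hm : m.f (2*k-1) = 2*k) {a c : ℕ}
    (ha : a ≤ 2*k-2) (hc : c ≤ 2*k-2) :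
    omegab b m a c = omegab b (down m) a c := by
  have hiff := iff_congr (charge_down hk m hm ha) (charge_down hk m hm hc)
  unfold omegab
  by_cases h : charge m a ↔ charge m c
  · rw [if_pos h, if_pos (hiff.mp h)]
  · rw [if_neg h, if_neg (fun hc' => h (hiff.mpr hc'))]

end PairPartition


open scoped Classical
open PairPartition PowerSeries

noncomputable abbrev R0 := MvPolynomial (Fin 2) ℤ

noncomputable def b0 : R0 := MvPolynomial.X 0
noncomputable def y0 : R0 := MvPolynomial.X 1

/-- Coefficient extraction on vectors of power series. -/
noncomputable def cfv {k : ℕ} (d : ℕ) (u : PairPartition k → SeriesRing) :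
    PairPartition k → R0 :=
  fun n => PowerSeries.coeff d (u n)

lemma coeff_X_pow_mul_of_lt {R : Type*} [CommRing R] (w : PowerSeries R) {d j : ℕ}
    (h : d < j) : coeff d ((PowerSeries.X : PowerSeries R)^j * w) = 0 := by
  rw [PowerSeries.coeff_mul]
  apply Finset.sum_eq_zero
  intro p hp
  rw [PowerSeries.coeff_X_pow, if_neg, zero_mul]
  rintro rfl
  have := Finset.HasAntidiagonal.antidiagonal.fst_le hp
  omega

lemma omegab_bS {k : ℕ} (m : PairPartition k) (a c : ℕ) :
    omegab bS m a c = PowerSeries.C (omegab b0 m a c) := by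
  unfold omegab bS b0
  split_ifs <;> simp

lemma cfv_JbOp {k : ℕ} (d i : ℕ) (u : PairPartition k → SeriesRing) :
    cfv d (JbOp bS i u) = JbOp b0 i (cfv d u) := by
  funext n
  unfold cfv JbOp
  rw [map_sum]
  refine Finset.sum_congr rfl fun a _ => ?_
  rw [omegab_bS, PowerSeries.coeff_C_mul]

lemma cfv_JbOp_iter {k : ℕ} (d i j : ℕ) (u : PairPartition k → SeriesRing) :
    cfv d ((JbOp bS i)^[j] u) = (JbOp b0 i)^[j] (cfv d u) := by
  induction j generalizing u with
  | zero => rfl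
  | succ j ih =>
      rw [Function.iterate_succ_apply, Function.iterate_succ_apply, ih, cfv_JbOp]

lemma JbOp_add {R : Type*} [CommRing R] (b : R) {k : ℕ} (i : ℕ)
    (p q : PairPartition k → R) :
    JbOp b i (fun n => p n + q n) = fun n => JbOp b i p n + JbOp b i q n := by
  funext n
  unfold JbOp
  rw [← Finset.sum_add_distrib]
  exact Finset.sum_congr rfl fun a _ => by ring

lemma JbOp_sub {R : Type*} [CommRing R] (b : R) {k : ℕ} (i : ℕ)
    (p q : PairPartition k → R) :
    JbOp b i (fun n => p n - q n) = fun n => JbOp b i p n - JbOp b i q n := by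
  funext n
  unfold JbOp
  rw [← Finset.sum_sub_distrib]
  exact Finset.sum_congr rfl fun a _ => by ring

lemma JbOp_const_mul {R : Type*} [CommRing R] (b r : R) {k : ℕ} (i : ℕ)
    (p : PairPartition k → R) :
    JbOp b i (fun n => r * p n) = fun n => r * JbOp b i p n := by
  funext n
  unfold JbOp
  rw [Finset.mul_sum]
  exact Finset.sum_congr rfl fun a _ => by ring

lemma JbOp_finset_sum {R : Type*} [CommRing R] (b : R) {k : ℕ} (i : ℕ)
    {ι : Type*} (s : Finset ι) (g : ι → PairPartition k → R) :
    JbOp b i (fun n => ∑ j ∈ s, g j n) = fun n => ∑ j ∈ s, JbOp b i (g j) n := by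
  classical
  induction s using Finset.induction_on with
  | empty =>
      funext n
      simp only [Finset.sum_empty]
      unfold JbOp
      simp
  | @insert a s hx ih =>
      funext n
      simp only [Finset.sum_insert hx]
      have h1 := JbOp_add b i (g a) (fun n => ∑ j ∈ s, g j n)
      calc JbOp b i (fun n => g a n + ∑ j ∈ s, g j n) n
          = JbOp b i (g a) n + JbOp b i (fun n => ∑ j ∈ s, g j n) n := congrFun h1 n
        _ = _ := by rw [congrFun ih n]

lemma neg_one_pow_C (j : ℕ) :
    ((-1 : SeriesRing))^j = PowerSeries.C ((-1 : R0)^j) := by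
  rw [map_pow, map_neg, map_one]

lemma cfv_invApply (k i : ℕ) (v : PairPartition k → SeriesRing) (d : ℕ) :
    cfv d (invApply k i v) =
      fun n => ∑ j ∈ Finset.range (d+1),
        ((-1 : R0)^j) * ((JbOp b0 i)^[j] (cfv (d-j) v)) n := by
  funext n
  unfold cfv invApply
  rw [PowerSeries.coeff_mk]
  have hsupp : Function.support (fun j => PowerSeries.coeff d
      ((-(PowerSeries.X : SeriesRing))^j * ((JbOp bS i)^[j] v) n)) ⊆ ↑(Finset.range (d+1)) := by
    intro j hj
    simp only [Function.mem_support] at hj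
    by_contra hjr
    apply hj
    have hd : d < j := by
      simp only [Finset.coe_range, Set.mem_Iio] at hjr
      omega
    rw [neg_pow, mul_assoc, neg_one_pow_C, PowerSeries.coeff_C_mul,
      coeff_X_pow_mul_of_lt _ hd, mul_zero]
  rw [finsum_eq_finset_sum_of_support_subset _ hsupp]
  refine Finset.sum_congr rfl fun j hj => ?_
  have hji : j ≤ d := by
    simp only [Finset.mem_range] at hj
    omega
  rw [neg_pow, mul_assoc, neg_one_pow_C, PowerSeries.coeff_C_mul]
  congr 1
  have hX := PowerSeries.coeff_X_pow_mul (((JbOp bS i)^[j] v) n) j (d - j)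
  rw [show (d - j) + j = d from by omega] at hX
  rw [hX]
  exact congrFun (cfv_JbOp_iter (d-j) i j v) n

lemma cfv_invApply_zero (k i : ℕ) (v : PairPartition k → SeriesRing) :
    cfv 0 (invApply k i v) = cfv 0 v := by
  rw [cfv_invApply]
  funext n
  simp

lemma cfv_invApply_succ (k i : ℕ) (v : PairPartition k → SeriesRing) (d : ℕ) :
    cfv (d+1) (invApply k i v)
      = fun n => cfv (d+1) v n - JbOp b0 i (cfv d (invApply k i v)) n := by
  funext n
  rw [cfv_invApply, cfv_invApply]
  show (∑ j ∈ Finset.range (d+1+1), ((-1:R0))^j * ((JbOp b0 i)^[j] (cfv (d+1-j) v)) n) = _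
  rw [Finset.sum_range_succ']
  simp only [Nat.add_sub_add_right, pow_zero, one_mul, Function.iterate_zero, id_eq,
    Nat.sub_zero]
  have hJ : JbOp b0 i (fun n => ∑ j ∈ Finset.range (d+1),
        ((-1:R0))^j * ((JbOp b0 i)^[j] (cfv (d-j) v)) n) n
      = ∑ j ∈ Finset.range (d+1), ((-1:R0))^j * ((JbOp b0 i)^[j+1] (cfv (d-j) v)) n := by
    rw [congrFun (JbOp_finset_sum b0 i (Finset.range (d+1))
      (fun j => fun n => ((-1:R0))^j * ((JbOp b0 i)^[j] (cfv (d-j) v)) n)) n]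
    refine Finset.sum_congr rfl fun j hj => ?_
    rw [congrFun (JbOp_const_mul b0 ((-1:R0)^j) i ((JbOp b0 i)^[j] (cfv (d-j) v))) n,
      Function.iterate_succ_apply']
  rw [hJ]
  have hneg : ∑ j ∈ Finset.range (d+1),
        ((-1:R0))^(j+1) * ((JbOp b0 i)^[j+1] (cfv (d-j) v)) n
      = -∑ j ∈ Finset.range (d+1), ((-1:R0))^j * ((JbOp b0 i)^[j+1] (cfv (d-j) v)) n := by
    rw [← Finset.sum_neg_distrib]
    refine Finset.sum_congr rfl fun j hj => by ring
  rw [hneg]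
  ring

lemma yS_eq : yS = PowerSeries.C y0 := rfl

lemma cfv_prodVec_succ_zero (k j : ℕ) :
    cfv 0 (prodVec k (j+1))
      = fun n => y0 * cfv 0 (invApply k (j+1) (prodVec k j)) n := by
  funext n
  show PowerSeries.coeff 0 (yS * _ + PowerSeries.X * _) = _
  rw [map_add, yS_eq, PowerSeries.coeff_C_mul, PowerSeries.coeff_zero_X_mul, add_zero]
  rfl

lemma cfv_prodVec_succ_succ (k j d : ℕ) :
    cfv (d+1) (prodVec k (j+1))
      = fun n => y0 * cfv (d+1) (invApply k (j+1) (prodVec k j)) n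
          + JbOp b0 (j+1) (cfv d (invApply k (j+1) (prodVec k j))) n := by
  funext n
  show PowerSeries.coeff (d+1) (yS * _ + PowerSeries.X * _) = _
  rw [map_add, yS_eq, PowerSeries.coeff_C_mul, PowerSeries.coeff_succ_X_mul]
  congr 1
  exact congrFun (cfv_JbOp d (j+1) (invApply k (j+1) (prodVec k j))) n

lemma cfv_prodVec_zero (k d : ℕ) :
    cfv d (prodVec k 0)
      = fun n => if n = triv k then (if d = 0 then (1:R0) else 0) else 0 := by
  funext n
  show PowerSeries.coeff d (if n = triv k then 1 else 0) = _
  split_ifs with h1 h2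
  · rw [h2, PowerSeries.coeff_zero_eq_constantCoeff, map_one]
  · rw [PowerSeries.coeff_one, if_neg h2]
  · rw [map_zero]


open scoped Classical
open PairPartition PowerSeries

def Sset (k : ℕ) (m : PairPartition k) (n : ℕ) : Set (List WStep) :=
  {ρ | IsPathTo k m ρ ∧ countA ρ + countC ρ = n}

noncomputable def Fw (k : ℕ) (m : PairPartition k) (ρ : List WStep) : R0 :=
  (-1 : R0) ^ countA ρ * y0 ^ countB ρ * pathWeight b0 k m ρ

lemma coeff_WgBT (k : ℕ) (m : PairPartition k) (n : ℕ) :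
    PowerSeries.coeff n (WgBT k m) = ∑ᶠ ρ ∈ Sset k m n, Fw k m ρ := by
  unfold WgBT
  rw [PowerSeries.coeff_mk]
  rfl

@[simp] lemma countA_consA (i : ℕ) (ρ : List WStep) :
    countA (WStep.A i :: ρ) = countA ρ + 1 := by simp [countA, List.filter]
@[simp] lemma countA_consB (ρ : List WStep) :
    countA (WStep.B :: ρ) = countA ρ := by simp [countA, List.filter]
@[simp] lemma countA_consC (i : ℕ) (ρ : List WStep) :
    countA (WStep.C i :: ρ) = countA ρ := by simp [countA, List.filter]
@[simp] lemma countB_consA (i : ℕ) (ρ : List WStep) :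
    countB (WStep.A i :: ρ) = countB ρ := by simp [countB, List.filter]
@[simp] lemma countB_consB (ρ : List WStep) :
    countB (WStep.B :: ρ) = countB ρ + 1 := by simp [countB, List.filter]
@[simp] lemma countB_consC (i : ℕ) (ρ : List WStep) :
    countB (WStep.C i :: ρ) = countB ρ := by simp [countB, List.filter]
@[simp] lemma countC_consA (i : ℕ) (ρ : List WStep) :
    countC (WStep.A i :: ρ) = countC ρ := by simp [countC, List.filter]
@[simp] lemma countC_consB (ρ : List WStep) :
    countC (WStep.B :: ρ) = countC ρ := by simp [countC, List.filter]
@[simp] lemma countC_consC (i : ℕ) (ρ : List WStep) :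
    countC (WStep.C i :: ρ) = countC ρ + 1 := by simp [countC, List.filter]

lemma countBC_eq (ρ : List WStep) : ∀ (k : ℕ) (m : PairPartition k),
    IsPathTo k m ρ → countB ρ + countC ρ = k := by
  induction ρ with
  | nil =>
      intro k m h
      cases k with
      | zero => simp [countB, countC, List.filter]
      | succ k => exact h.elim
  | cons s ρ ih =>
      intro k m h
      cases k with
      | zero => exact h.elim
      | succ k =>
          cases s with
          | A i =>
              have := ih (k+1) _ h.2.2
              simp only [countB_consA, countC_consA]
              omega
          | B =>
              have := ih k _ h.2
              simp only [countB_consB, countC_consB]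
              omega
          | C i =>
              have := ih k _ h.2.2.2
              simp only [countB_consC, countC_consC]
              omega

lemma counts_length (ρ : List WStep) :
    countA ρ + countB ρ + countC ρ = ρ.length := by
  induction ρ with
  | nil => rfl
  | cons s ρ ih =>
      cases s <;>
        simp only [countA_consA, countA_consB, countA_consC, countB_consA, countB_consB,
          countB_consC, countC_consA, countC_consB, countC_consC, List.length_cons] <;>
        omega

lemma steps_bound (ρ : List WStep) : ∀ (k : ℕ) (m : PairPartition k), IsPathTo k m ρ →
    ∀ s ∈ ρ, s = WStep.B ∨ ∃ i, 1 ≤ i ∧ i ≤ 2*k ∧ (s = WStep.A i ∨ s = WStep.C i) := by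
  induction ρ with
  | nil => intro k m _ s hs; exact absurd hs List.not_mem_nil
  | cons t ρ ih =>
      intro k m h s hs
      cases k with
      | zero => exact h.elim
      | succ k =>
          rcases List.mem_cons.mp hs with rfl | hs'
          · cases s with
            | A i =>
                refine Or.inr ⟨i, h.1, ?_, Or.inl rfl⟩
                have := h.2.1; omega
            | B => exact Or.inl rfl
            | C i =>
                refine Or.inr ⟨i, h.1, ?_, Or.inr rfl⟩
                have := h.2.1; omega
          · cases t with
            | A i => exact ih (k+1) _ h.2.2 s hs'
            | B =>
                rcases ih k _ h.2 s hs' with h' | ⟨i, h1, h2, h3⟩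
                · exact Or.inl h'
                · exact Or.inr ⟨i, h1, by omega, h3⟩
            | C i =>
                rcases ih k _ h.2.2.2 s hs' with h' | ⟨i', h1, h2, h3⟩
                · exact Or.inl h'
                · exact Or.inr ⟨i', h1, by omega, h3⟩

noncomputable def allLists (S : Finset WStep) : ℕ → Finset (List WStep)
  | 0 => {[]}
  | L+1 => {[]} ∪ (S ×ˢ allLists S L).image fun p => p.1 :: p.2

lemma mem_allLists (S : Finset WStep) : ∀ (L : ℕ) (l : List WStep),
    l.length ≤ L → (∀ s ∈ l, s ∈ S) → l ∈ allLists S L := by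
  intro L
  induction L with
  | zero =>
      intro l hl _
      have : l = [] := List.eq_nil_of_length_eq_zero (Nat.le_zero.mp hl)
      subst this
      simp [allLists]
  | succ L ih =>
      intro l hl hmem
      cases l with
      | nil => simp [allLists]
      | cons s l' =>
          simp only [allLists, Finset.mem_union, Finset.mem_image]
          right
          refine ⟨(s, l'), ?_, rfl⟩
          refine Finset.mem_product.mpr ⟨hmem s (by simp), ?_⟩
          exact ih l' (by simpa using hl) (fun x hx => hmem x (by simp [hx]))

lemma Sset_finite (k : ℕ) (m : PairPartition k) (n : ℕ) : (Sset k m n).Finite := by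
  apply Set.Finite.subset (Finset.finite_toSet (allLists
    (insert WStep.B (((Finset.Icc 1 (2*k)).image WStep.A)
      ∪ ((Finset.Icc 1 (2*k)).image WStep.C))) (n + k)))
  rintro ρ ⟨h1, h2⟩
  apply Finset.mem_coe.mpr
  apply mem_allLists
  · have hlen := counts_length ρ
    have hbc := countBC_eq ρ k m h1
    omega
  · intro s hs
    rcases steps_bound ρ k m h1 s hs with rfl | ⟨i, hi1, hi2, rfl | rfl⟩
    · exact Finset.mem_insert_self _ _
    · apply Finset.mem_insert_of_mem
      apply Finset.mem_union_left
      exact Finset.mem_image.mpr ⟨i, Finset.mem_Icc.mpr ⟨hi1, hi2⟩, rfl⟩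
    · apply Finset.mem_insert_of_mem
      apply Finset.mem_union_right
      exact Finset.mem_image.mpr ⟨i, Finset.mem_Icc.mpr ⟨hi1, hi2⟩, rfl⟩

lemma finsum_mem_mul_left {α : Type*} {S : Set α} (hS : S.Finite) (c : R0) (f : α → R0) :
    ∑ᶠ x ∈ S, c * f x = c * ∑ᶠ x ∈ S, f x := by
  rw [← hS.coe_toFinset, finsum_mem_coe_finset, finsum_mem_coe_finset, Finset.mul_sum]

lemma Fw_consA (K : ℕ) (m : PairPartition (K+1)) (i : ℕ) (ρ : List WStep) :
    Fw (K+1) m (WStep.A i :: ρ)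
      = -(omegab b0 m i (2*(K+1)-1)) * Fw (K+1) (swapAct i (2*(K+1)-1) m) ρ := by
  unfold Fw
  rw [countA_consA, countB_consA,
    show pathWeight b0 (K+1) m (WStep.A i :: ρ)
      = omegab b0 m i (2*(K+1)-1) * pathWeight b0 (K+1) (swapAct i (2*(K+1)-1) m) ρ from rfl]
  ring

lemma Fw_consB (K : ℕ) (m : PairPartition (K+1)) (ρ : List WStep) :
    Fw (K+1) m (WStep.B :: ρ) = y0 * Fw K (down m) ρ := by
  unfold Fw
  rw [countA_consB, countB_consB,
    show pathWeight b0 (K+1) m (WStep.B :: ρ) = pathWeight b0 K (down m) ρ from rfl]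
  ring

lemma Fw_consC (K : ℕ) (m : PairPartition (K+1)) (i : ℕ) (ρ : List WStep) :
    Fw (K+1) m (WStep.C i :: ρ) = Fw K (down (swapAct i (2*(K+1)-1) m)) ρ := by
  unfold Fw
  rw [countA_consC, countB_consC,
    show pathWeight b0 (K+1) m (WStep.C i :: ρ)
      = pathWeight b0 K (down (swapAct i (2*(K+1)-1) m)) ρ from rfl]

lemma disjoint_cons_images {s t : WStep} (h : s ≠ t) (S T : Set (List WStep)) :
    Disjoint ((List.cons s) '' S) ((List.cons t) '' T) := by
  rw [Set.disjoint_left]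
  rintro ρ ⟨x, hx, rfl⟩ ⟨y, hy, heq⟩
  injection heq with h1 h2
  exact h h1.symm

lemma disjoint_ite_left {c : Prop} [Decidable c] {S T : Set (List WStep)}
    (h : Disjoint S T) : Disjoint (if c then S else ∅) T := by
  split_ifs
  · exact h
  · simp

lemma disjoint_ite_right {c : Prop} [Decidable c] {S T : Set (List WStep)}
    (h : Disjoint S T) : Disjoint S (if c then T else ∅) := by
  split_ifs
  · exact h
  · simp

lemma Sset_zero_decomp (K : ℕ) (m : PairPartition (K+1)) :
    Sset (K+1) m 0 =
      (if m.f (2*(K+1)-1) = 2*(K+1) then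
          (List.cons WStep.B) '' Sset K (down m) 0 else ∅) := by
  ext ρ
  constructor
  · rintro ⟨h1, h2⟩
    cases ρ with
    | nil => exact h1.elim
    | cons s ρ' =>
        cases s with
        | A i => simp only [countA_consA, countC_consA] at h2; omega
        | B =>
            obtain ⟨hg, hp⟩ := h1
            rw [if_pos hg]
            refine ⟨ρ', ⟨hp, ?_⟩, rfl⟩
            simp only [countA_consB, countC_consB] at h2
            exact h2
        | C i =>
            simp only [countA_consC, countC_consC] at h2; omega
  · intro hρ
    by_cases hg : m.f (2*(K+1)-1) = 2*(K+1)
    · rw [if_pos hg] at hρ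
      obtain ⟨ρ', ⟨hp, hc⟩, rfl⟩ := hρ
      refine ⟨⟨hg, hp⟩, ?_⟩
      simp only [countA_consB, countC_consB]
      exact hc
    · rw [if_neg hg] at hρ
      exact hρ.elim

lemma Sset_succ_decomp (K n : ℕ) (m : PairPartition (K+1)) :
    Sset (K+1) m (n+1) =
      ((⋃ a ∈ (↑(Finset.Icc 1 (2*(K+1)-2)) : Set ℕ),
          (List.cons (WStep.A a)) '' Sset (K+1) (swapAct a (2*(K+1)-1) m) n)
        ∪ (if m.f (2*(K+1)-1) = 2*(K+1) then
            (List.cons WStep.B) '' Sset K (down m) (n+1) else ∅))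
      ∪ (⋃ a ∈ (↑(Finset.Icc 1 (2*(K+1)-2)) : Set ℕ),
          (if m.f a = 2*(K+1) then
            (List.cons (WStep.C a)) '' Sset K (down (swapAct a (2*(K+1)-1) m)) n else ∅)) := by
  ext ρ
  constructor
  · rintro ⟨h1, h2⟩
    cases ρ with
    | nil => exact h1.elim
    | cons s ρ' =>
        cases s with
        | A i =>
            obtain ⟨ha1, ha2, hp⟩ := h1
            left; left
            simp only [Set.mem_iUnion, Finset.mem_coe, Finset.mem_Icc, exists_prop]
            refine ⟨i, ⟨ha1, ha2⟩, ρ', ⟨hp, ?_⟩, rfl⟩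
            simp only [countA_consA, countC_consA] at h2
            omega
        | B =>
            obtain ⟨hg, hp⟩ := h1
            left; right
            rw [if_pos hg]
            refine ⟨ρ', ⟨hp, ?_⟩, rfl⟩
            simp only [countA_consB, countC_consB] at h2
            exact h2
        | C i =>
            obtain ⟨ha1, ha2, hf, hp⟩ := h1
            right
            simp only [Set.mem_iUnion, Finset.mem_coe, Finset.mem_Icc, exists_prop]
            refine ⟨i, ⟨ha1, ha2⟩, ?_⟩
            rw [if_pos hf]
            refine ⟨ρ', ⟨hp, ?_⟩, rfl⟩
            simp only [countA_consC, countC_consC] at h2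
            omega
  · rintro ((hA | hB) | hC)
    · simp only [Set.mem_iUnion, Finset.mem_coe, Finset.mem_Icc, exists_prop] at hA
      obtain ⟨a, ⟨ha1, ha2⟩, ρ', ⟨hp, hc⟩, rfl⟩ := hA
      refine ⟨⟨ha1, ha2, hp⟩, ?_⟩
      simp only [countA_consA, countC_consA]
      omega
    · by_cases hg : m.f (2*(K+1)-1) = 2*(K+1)
      · rw [if_pos hg] at hB
        obtain ⟨ρ', ⟨hp, hc⟩, rfl⟩ := hB
        refine ⟨⟨hg, hp⟩, ?_⟩
        simp only [countA_consB, countC_consB]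
        exact hc
      · rw [if_neg hg] at hB
        exact hB.elim
    · simp only [Set.mem_iUnion, Finset.mem_coe, Finset.mem_Icc, exists_prop] at hC
      obtain ⟨a, ⟨ha1, ha2⟩, hmem⟩ := hC
      by_cases hf : m.f a = 2*(K+1)
      · rw [if_pos hf] at hmem
        obtain ⟨ρ', ⟨hp, hc⟩, rfl⟩ := hmem
        refine ⟨⟨ha1, ha2, hf, hp⟩, ?_⟩
        simp only [countA_consC, countC_consC]
        omega
      · rw [if_neg hf] at hmem
        exact hmem.elim

lemma WgBT_coeff_zero (K : ℕ) (m : PairPartition (K+1)) :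
    PowerSeries.coeff 0 (WgBT (K+1) m)
      = y0 * (if m.f (2*(K+1)-1) = 2*(K+1)
          then PowerSeries.coeff 0 (WgBT K (down m)) else 0) := by
  rw [coeff_WgBT, Sset_zero_decomp]
  by_cases hg : m.f (2*(K+1)-1) = 2*(K+1)
  · rw [if_pos hg, if_pos hg]
    rw [finsum_mem_image (List.cons_injective.injOn)]
    rw [finsum_mem_congr rfl (fun ρ' _ => Fw_consB K m ρ')]
    rw [finsum_mem_mul_left (Sset_finite K (down m) 0)]
    rw [← coeff_WgBT]
  · rw [if_neg hg, if_neg hg, finsum_mem_empty, mul_zero]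

lemma WgBT_coeff_succ (K n : ℕ) (m : PairPartition (K+1)) :
    PowerSeries.coeff (n+1) (WgBT (K+1) m)
      = -(∑ a ∈ Finset.Icc 1 (2*(K+1)-2),
            omegab b0 m a (2*(K+1)-1)
              * PowerSeries.coeff n (WgBT (K+1) (swapAct a (2*(K+1)-1) m)))
        + y0 * (if m.f (2*(K+1)-1) = 2*(K+1)
            then PowerSeries.coeff (n+1) (WgBT K (down m)) else 0)
        + ∑ a ∈ Finset.Icc 1 (2*(K+1)-2),
            (if m.f a = 2*(K+1)
              then PowerSeries.coeff n (WgBT K (down (swapAct a (2*(K+1)-1) m))) else 0) := by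
  rw [coeff_WgBT, Sset_succ_decomp]
  have hUAfin : ((⋃ a ∈ (↑(Finset.Icc 1 (2*(K+1)-2)) : Set ℕ), (List.cons (WStep.A a)) '' Sset (K+1) (swapAct a (2*(K+1)-1) m) n) : Set (List WStep)).Finite :=
    Set.Finite.biUnion (Finset.finite_toSet _)
      (fun a _ => (Sset_finite _ _ _).image _)
  have hSBfin : ((if m.f (2*(K+1)-1) = 2*(K+1) then (List.cons WStep.B) '' Sset K (PairPartition.down m) (n+1) else ∅) : Set (List WStep)).Finite := by
    split_ifs
    · exact (Sset_finite _ _ _).image _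
    · exact Set.finite_empty
  have hUCfin : ((⋃ a ∈ (↑(Finset.Icc 1 (2*(K+1)-2)) : Set ℕ), (if m.f a = 2*(K+1) then (List.cons (WStep.C a)) '' Sset K (PairPartition.down (swapAct a (2*(K+1)-1) m)) n else ∅)) : Set (List WStep)).Finite := by
    refine Set.Finite.biUnion (Finset.finite_toSet _) (fun a _ => ?_)
    split_ifs
    · exact (Sset_finite _ _ _).image _
    · exact Set.finite_empty
  have hsubA : (⋃ a ∈ (↑(Finset.Icc 1 (2*(K+1)-2)) : Set ℕ), (List.cons (WStep.A a)) '' Sset (K+1) (swapAct a (2*(K+1)-1) m) n) ⊆ {ρ : List WStep | ∃ a x, ρ = WStep.A a :: x} := by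
    intro ρ hρ
    simp only [Set.mem_iUnion, exists_prop] at hρ
    obtain ⟨a, _, x, _, rfl⟩ := hρ
    exact ⟨a, x, rfl⟩
  have hsubB : (if m.f (2*(K+1)-1) = 2*(K+1) then (List.cons WStep.B) '' Sset K (PairPartition.down m) (n+1) else ∅) ⊆ {ρ : List WStep | ∃ x, ρ = WStep.B :: x} := by
    intro ρ hρ
    split_ifs at hρ
    · obtain ⟨x, _, rfl⟩ := hρ
      exact ⟨x, rfl⟩
    · exact hρ.elim
  have hsubC : (⋃ a ∈ (↑(Finset.Icc 1 (2*(K+1)-2)) : Set ℕ), (if m.f a = 2*(K+1) then (List.cons (WStep.C a)) '' Sset K (PairPartition.down (swapAct a (2*(K+1)-1) m)) n else ∅)) ⊆ {ρ : List WStep | ∃ a x, ρ = WStep.C a :: x} := by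
    intro ρ hρ
    simp only [Set.mem_iUnion, exists_prop] at hρ
    obtain ⟨a, _, hρ'⟩ := hρ
    split_ifs at hρ'
    · obtain ⟨x, _, rfl⟩ := hρ'
      exact ⟨a, x, rfl⟩
    · exact hρ'.elim
  have hdAB : Disjoint ((⋃ a ∈ (↑(Finset.Icc 1 (2*(K+1)-2)) : Set ℕ), (List.cons (WStep.A a)) '' Sset (K+1) (swapAct a (2*(K+1)-1) m) n) : Set (List WStep)) (if m.f (2*(K+1)-1) = 2*(K+1) then (List.cons WStep.B) '' Sset K (PairPartition.down m) (n+1) else ∅) := by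
    rw [Set.disjoint_left]
    intro ρ h1 h2
    obtain ⟨a, x, rfl⟩ := hsubA h1
    obtain ⟨y, heq⟩ := hsubB h2
    simp at heq
  have hdAC : Disjoint ((⋃ a ∈ (↑(Finset.Icc 1 (2*(K+1)-2)) : Set ℕ), (List.cons (WStep.A a)) '' Sset (K+1) (swapAct a (2*(K+1)-1) m) n) : Set (List WStep)) (⋃ a ∈ (↑(Finset.Icc 1 (2*(K+1)-2)) : Set ℕ), (if m.f a = 2*(K+1) then (List.cons (WStep.C a)) '' Sset K (PairPartition.down (swapAct a (2*(K+1)-1) m)) n else ∅)) := by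
    rw [Set.disjoint_left]
    intro ρ h1 h2
    obtain ⟨a, x, rfl⟩ := hsubA h1
    obtain ⟨a', y, heq⟩ := hsubC h2
    simp at heq
  have hdBC : Disjoint ((if m.f (2*(K+1)-1) = 2*(K+1) then (List.cons WStep.B) '' Sset K (PairPartition.down m) (n+1) else ∅) : Set (List WStep)) (⋃ a ∈ (↑(Finset.Icc 1 (2*(K+1)-2)) : Set ℕ), (if m.f a = 2*(K+1) then (List.cons (WStep.C a)) '' Sset K (PairPartition.down (swapAct a (2*(K+1)-1) m)) n else ∅)) := by
    rw [Set.disjoint_left]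
    intro ρ h1 h2
    obtain ⟨x, rfl⟩ := hsubB h1
    obtain ⟨a', y, heq⟩ := hsubC h2
    simp at heq
  rw [finsum_mem_union (Disjoint.union_left hdAC hdBC) (hUAfin.union hSBfin) hUCfin,
    finsum_mem_union hdAB hUAfin hSBfin]
  congr 1
  · congr 1
    · -- A part
      have hpdA : (↑(Finset.Icc 1 (2*(K+1)-2)) : Set ℕ).PairwiseDisjoint
          (fun a => (List.cons (WStep.A a)) '' Sset (K+1) (swapAct a (2*(K+1)-1) m) n) := by
        intro a _ b _ hab
        exact disjoint_cons_images (fun h => hab (WStep.A.inj h)) _ _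
      rw [finsum_mem_biUnion hpdA (Finset.finite_toSet _)
        (fun a _ => (Sset_finite _ _ _).image _)]
      rw [finsum_mem_coe_finset]
      rw [← Finset.sum_neg_distrib]
      refine Finset.sum_congr rfl fun a ha => ?_
      rw [finsum_mem_image (List.cons_injective.injOn)]
      rw [finsum_mem_congr rfl (fun ρ' _ => Fw_consA K m a ρ')]
      rw [finsum_mem_mul_left (Sset_finite _ _ _), ← coeff_WgBT, neg_mul]
    · -- B part
      by_cases hg : m.f (2*(K+1)-1) = 2*(K+1)
      · rw [if_pos hg, if_pos hg]
        rw [finsum_mem_image (List.cons_injective.injOn)]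
        rw [finsum_mem_congr rfl (fun ρ' _ => Fw_consB K m ρ')]
        rw [finsum_mem_mul_left (Sset_finite _ _ _), ← coeff_WgBT]
      · rw [if_neg hg, if_neg hg, finsum_mem_empty, mul_zero]
  · -- C part
    have hpdC : (↑(Finset.Icc 1 (2*(K+1)-2)) : Set ℕ).PairwiseDisjoint
        (fun a => (if m.f a = 2*(K+1) then
          (List.cons (WStep.C a)) '' Sset K (PairPartition.down (swapAct a (2*(K+1)-1) m)) n else ∅)) := by
      intro a _ b _ hab
      show Disjoint
        (if m.f a = 2*(K+1) then
          (List.cons (WStep.C a)) '' Sset K (PairPartition.down (swapAct a (2*(K+1)-1) m)) n else ∅)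
        (if m.f b = 2*(K+1) then
          (List.cons (WStep.C b)) '' Sset K (PairPartition.down (swapAct b (2*(K+1)-1) m)) n else ∅)
      exact disjoint_ite_left (disjoint_ite_right
        (disjoint_cons_images (fun h => hab (WStep.C.inj h)) _ _))
    rw [finsum_mem_biUnion hpdC (Finset.finite_toSet _)
      (fun a _ => by split_ifs; exacts [(Sset_finite _ _ _).image _, Set.finite_empty])]
    rw [finsum_mem_coe_finset]
    refine Finset.sum_congr rfl fun a ha => ?_
    by_cases hf : m.f a = 2*(K+1)
    · rw [if_pos hf, if_pos hf]
      rw [finsum_mem_image (List.cons_injective.injOn)]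
      rw [finsum_mem_congr rfl (fun ρ' _ => Fw_consC K m a ρ')]
      rw [← coeff_WgBT]
    · rw [if_neg hf, if_neg hf, finsum_mem_empty]


open scoped Classical
open PairPartition PowerSeries

noncomputable def resv (K : ℕ) (v : PairPartition K → R0) : PairPartition (K+1) → R0 :=
  fun m => if m.f (2*(K+1)-1) = 2*(K+1) then v (down m) else 0

lemma resv_sub (K : ℕ) (v w : PairPartition K → R0) :
    resv K (fun n => v n - w n) = fun m => resv K v m - resv K w m := by
  funext m
  unfold resv
  split_ifs
  · rfl
  · rw [sub_zero]

lemma resv_mul_add (K : ℕ) (c : R0) (v w : PairPartition K → R0) :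
    resv K (fun n => c * v n + w n) = fun m => c * resv K v m + resv K w m := by
  funext m
  unfold resv
  split_ifs
  · rfl
  · rw [mul_zero, add_zero]

lemma resv_const_mul (K : ℕ) (c : R0) (v : PairPartition K → R0) :
    resv K (fun n => c * v n) = fun m => c * resv K v m := by
  funext m
  unfold resv
  split_ifs
  · rfl
  · rw [mul_zero]

lemma JbOp_resv (K i : ℕ) (hi : i ≤ K) (v : PairPartition K → R0) :
    JbOp b0 i (resv K v) = resv K (JbOp b0 i v) := by
  funext m
  show (∑ a ∈ Finset.Icc 1 (2*i-2), omegab b0 m a (2*i-1)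
      * resv K v (swapAct a (2*i-1) m)) = _
  unfold resv
  by_cases hg : m.f (2*(K+1)-1) = 2*(K+1)
  · rw [if_pos hg]
    show _ = ∑ a ∈ Finset.Icc 1 (2*i-2), omegab b0 (down m) a (2*i-1)
      * v (swapAct a (2*i-1) (down m))
    refine Finset.sum_congr rfl fun a ha => ?_
    obtain ⟨ha1, ha2⟩ := Finset.mem_Icc.mp ha
    have hb : a ≤ 2*(K+1)-2 := by omega
    have hc1 : 1 ≤ 2*i-1 := by omega
    have hc2 : 2*i-1 ≤ 2*(K+1)-2 := by omega
    have hcond : ((swapAct a (2*i-1) m).f (2*(K+1)-1) = 2*(K+1))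
        ↔ (m.f (2*(K+1)-1) = 2*(K+1)) :=
      swapAct_top_pair m (by omega) (by omega) hb hc1 hc2
    rw [if_pos (hcond.mpr hg)]
    have hds : down (swapAct a (2*i-1) m) = swapAct a (2*i-1) (down m) :=
      down_swapAct m (by omega) hg (by omega) hb hc1 hc2
    rw [hds, omegab_down b0 (show 1 ≤ K+1 by omega) m hg hb hc2]
  · rw [if_neg hg]
    apply Finset.sum_eq_zero
    intro a ha
    obtain ⟨ha1, ha2⟩ := Finset.mem_Icc.mp ha
    have hb : a ≤ 2*(K+1)-2 := by omega
    have hc1 : 1 ≤ 2*i-1 := by omega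
    have hc2 : 2*i-1 ≤ 2*(K+1)-2 := by omega
    have hcond : ((swapAct a (2*i-1) m).f (2*(K+1)-1) = 2*(K+1))
        ↔ (m.f (2*(K+1)-1) = 2*(K+1)) :=
      swapAct_top_pair m (by omega) (by omega) hb hc1 hc2
    rw [if_neg (fun hcon => hg (hcond.mp hcon)), mul_zero]

lemma prodVec_res (K : ℕ) : ∀ j, j ≤ K → ∀ d,
    cfv d (prodVec (K+1) j) = resv K (cfv d (prodVec K j)) := by
  intro j
  induction j with
  | zero =>
      intro _ d
      rw [cfv_prodVec_zero, cfv_prodVec_zero]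
      funext m
      unfold resv
      by_cases h1 : m.f (2*(K+1)-1) = 2*(K+1)
      · rw [if_pos h1]
        show (if m = triv (K+1) then (if d = 0 then (1:R0) else 0) else 0)
            = (if down m = triv K then (if d = 0 then (1:R0) else 0) else 0)
        by_cases h2 : down m = triv K
        · rw [if_pos h2, if_pos]
          exact (eq_triv_iff (by omega) m).mpr ⟨h1, h2⟩
        · rw [if_neg h2, if_neg]
          intro hc
          exact h2 ((eq_triv_iff (show 1 ≤ K+1 by omega) m).mp hc).2
      · rw [if_neg h1]
        show (if m = triv (K+1) then (if d = 0 then (1:R0) else 0) else 0) = 0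
        rw [if_neg]
        intro hc
        exact h1 ((eq_triv_iff (show 1 ≤ K+1 by omega) m).mp hc).1
  | succ j ih =>
      intro hj d
      have hres : ∀ d, cfv d (invApply (K+1) (j+1) (prodVec (K+1) j))
          = resv K (cfv d (invApply K (j+1) (prodVec K j))) := by
        intro d
        induction d with
        | zero =>
            rw [cfv_invApply_zero, cfv_invApply_zero]
            exact ih (by omega) 0
        | succ d ihd =>
            rw [cfv_invApply_succ, cfv_invApply_succ]
            rw [ih (by omega) (d+1), ihd, JbOp_resv K (j+1) (by omega)]
            rw [resv_sub]
      cases d with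
      | zero =>
          rw [cfv_prodVec_succ_zero, cfv_prodVec_succ_zero, hres 0, ← resv_const_mul]
      | succ d =>
          rw [cfv_prodVec_succ_succ, cfv_prodVec_succ_succ, hres (d+1), hres d,
            JbOp_resv K (j+1) (by omega), ← resv_mul_add]

lemma Sset_zero_zero (m : PairPartition 0) : Sset 0 m 0 = {([] : List WStep)} := by
  ext ρ
  constructor
  · rintro ⟨h1, h2⟩
    cases ρ with
    | nil => rfl
    | cons s ρ' => exact h1.elim
  · rintro rfl
    exact ⟨trivial, rfl⟩

lemma Sset_zero_succ (m : PairPartition 0) (e : ℕ) : Sset 0 m (e+1) = ∅ := by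
  ext ρ
  simp only [Set.mem_empty_iff_false, iff_false]
  rintro ⟨h1, h2⟩
  cases ρ with
  | nil => simp [countA, countC, List.filter] at h2
  | cons s ρ' => exact h1.elim

lemma coeff_WgBT_zero_level (m : PairPartition 0) (d : ℕ) :
    PowerSeries.coeff d (WgBT 0 m) = if d = 0 then 1 else 0 := by
  cases d with
  | zero =>
      rw [coeff_WgBT, Sset_zero_zero, finsum_mem_singleton, if_pos rfl]
      show (-1 : R0) ^ countA [] * y0 ^ countB [] * pathWeight b0 0 m [] = 1
      simp [countA, countB, List.filter]
      rfl
  | succ e =>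
      rw [coeff_WgBT, Sset_zero_succ, finsum_mem_empty, if_neg (by omega)]

lemma pp0_triv (m : PairPartition 0) : m = triv 0 := by
  apply ext'
  funext a
  have h1 : m.f a = a := by
    by_contra h
    have := (m.moves a).mp h
    omega
  show m.f a = trivFun 0 a
  rw [h1]
  unfold trivFun
  split_ifs <;> omega

noncomputable def Wv (k d : ℕ) : PairPartition k → R0 := cfv d (fun m => WgBT k m)
noncomputable def Vv (K n : ℕ) : PairPartition (K+1) → R0 := resv K (Wv K n)
noncomputable def Av (K d : ℕ) : PairPartition (K+1) → R0 :=
  cfv d (invApply (K+1) (K+1) (prodVec (K+1) K))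
noncomputable def Pv (K d : ℕ) : PairPartition (K+1) → R0 := cfv d (prodVec (K+1) (K+1))
noncomputable def uv (K d : ℕ) : PairPartition (K+1) → R0 := cfv d (prodVec (K+1) K)

lemma JbOp_resv_WgBT (K n : ℕ) :
    JbOp b0 (K+1) (Vv K n)
      = fun m => ∑ a ∈ Finset.Icc 1 (2*(K+1)-2),
          (if m.f a = 2*(K+1)
            then PowerSeries.coeff n
              (WgBT K (@PairPartition.down (K+1) (swapAct a (2*(K+1)-1) m))) else 0) := by
  funext m
  show (∑ a ∈ Finset.Icc 1 (2*(K+1)-2), omegab b0 m a (2*(K+1)-1)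
      * Vv K n (swapAct a (2*(K+1)-1) m)) = _
  refine Finset.sum_congr rfl fun a ha => ?_
  obtain ⟨ha1, ha2⟩ := Finset.mem_Icc.mp ha
  have hcond := swapAct_top_eq m (show 1 ≤ K+1 by omega) ha1 ha2
  show omegab b0 m a (2*(K+1)-1) * (if (swapAct a (2*(K+1)-1) m).f (2*(K+1)-1) = 2*(K+1)
      then PowerSeries.coeff n
        (WgBT K (@PairPartition.down (K+1) (swapAct a (2*(K+1)-1) m))) else 0) = _
  by_cases hf : m.f a = 2*(K+1)
  · rw [if_pos (hcond.mpr hf), if_pos hf,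
      omegab_eq_one_of_pair b0 (show 1 ≤ K+1 by omega) m ha1 ha2 hf, one_mul]
  · rw [if_neg (fun hcon => hf (hcond.mp hcon)), if_neg hf, mul_zero]

lemma hW0 (K : ℕ) : Wv (K+1) 0 = fun m => y0 * Vv K 0 m := by
  funext m
  show PowerSeries.coeff 0 (WgBT (K+1) m)
    = y0 * (if m.f (2*(K+1)-1) = 2*(K+1)
        then PowerSeries.coeff 0 (WgBT K (down m)) else 0)
  exact WgBT_coeff_zero K m

lemma hWs (K n : ℕ) : Wv (K+1) (n+1)
    = fun m => -(JbOp b0 (K+1) (Wv (K+1) n) m) + y0 * Vv K (n+1) m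
        + JbOp b0 (K+1) (Vv K n) m := by
  funext m
  show PowerSeries.coeff (n+1) (WgBT (K+1) m) = _
  rw [WgBT_coeff_succ K n m, (congrFun (JbOp_resv_WgBT K n) m).symm]
  rfl

lemma hA0 (K : ℕ) : Av K 0 = uv K 0 := cfv_invApply_zero (K+1) (K+1) (prodVec (K+1) K)

lemma hAs (K d : ℕ) : Av K (d+1)
    = fun n => uv K (d+1) n - JbOp b0 (K+1) (Av K d) n :=
  cfv_invApply_succ (K+1) (K+1) (prodVec (K+1) K) d

lemma hP0 (K : ℕ) : Pv K 0 = fun n => y0 * Av K 0 n := cfv_prodVec_succ_zero (K+1) K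

lemma hPs (K d : ℕ) : Pv K (d+1)
    = fun n => y0 * Av K (d+1) n + JbOp b0 (K+1) (Av K d) n :=
  cfv_prodVec_succ_succ (K+1) K d

lemma main_step (K : ℕ) (IH : ∀ d, Wv K d = cfv d (prodVec K K)) :
    ∀ d, Wv (K+1) d = Pv K d := by
  have hu : ∀ d, Vv K d = uv K d := by
    intro d
    unfold Vv uv
    rw [IH d]
    exact (prodVec_res K K le_rfl d).symm
  have hVe : ∀ d, Vv K d = fun n => Pv K d n + Av K d n - y0 * Av K d n := by
    intro d
    cases d with
    | zero =>
        funext n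
        rw [congrFun (hu 0) n, congrFun (hP0 K) n, ← congrFun (hA0 K) n]
        ring
    | succ d =>
        funext n
        rw [congrFun (hu (d+1)) n, congrFun (hPs K d) n, congrFun (hAs K d) n]
        ring
  intro d
  induction d with
  | zero =>
      rw [hW0 K, hP0 K]
      funext n
      rw [congrFun (hu 0) n, ← congrFun (hA0 K) n]
  | succ n ihn =>
      rw [hWs K n, hPs K n]
      funext q
      rw [ihn, hVe n]
      have hsplit : JbOp b0 (K+1) (fun n' => Pv K n n' + Av K n n' - y0 * Av K n n')
          = fun q => JbOp b0 (K+1) (Pv K n) q + JbOp b0 (K+1) (Av K n) q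
              - y0 * JbOp b0 (K+1) (Av K n) q := by
        funext q
        rw [congrFun (JbOp_sub b0 (K+1) (fun n' => Pv K n n' + Av K n n')
          (fun n' => y0 * Av K n n')) q]
        rw [congrFun (JbOp_add b0 (K+1) (Pv K n) (Av K n)) q]
        rw [congrFun (JbOp_const_mul b0 y0 (K+1) (Av K n)) q]
      rw [hsplit]
      rw [congrFun (hu (n+1)) q]
      have huA : uv K (n+1) q = Av K (n+1) q + JbOp b0 (K+1) (Av K n) q := by
        rw [congrFun (hAs K n) q]
        ring
      rw [huA]
      ring

lemma main_cfv : ∀ (k d : ℕ), cfv d (fun m => WgBT k m) = cfv d (prodVec k k) := by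
  intro k
  induction k with
  | zero =>
      intro d
      funext m
      show PowerSeries.coeff d (WgBT 0 m) = PowerSeries.coeff d (prodVec 0 0 m)
      rw [coeff_WgBT_zero_level]
      show _ = PowerSeries.coeff d (if m = triv 0 then 1 else 0)
      rw [if_pos (pp0_triv m), PowerSeries.coeff_one]
  | succ K IH => exact main_step K IH

theorem product_formula_WgBT'
    (k : ℕ) (hk : 1 ≤ k) :
    (fun m : PairPartition k => WgBT k m) = prodVec k k := by
  funext m
  apply PowerSeries.ext
  intro d
  exact congrFun (main_cfv k d) m


/-- **Jucys–Murphy-type product formula for the `bt`-Weingarten function**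
(Proposition 5.7, power-series form).  Let `k ≥ 1`.  In the module of formal power
series in `X` with coefficients in the free `ℤ[b,y]`-module with basis `𝒫_k` (realised
as functions `𝒫_k → (ℤ[b,y])⟦X⟧`), with the `b`-deformed Jucys–Murphy operators `𝒥_i`
acting coefficientwise,
`∑_{𝔪 ∈ 𝒫_k} Wg^(bt)(𝔪) 𝔪
  = (y + X𝒥_k)(1 + X𝒥_k)⁻¹ ⋯ (y + X𝒥_1)(1 + X𝒥_1)⁻¹ (𝔢_k)`,
where `(1 + X𝒥_i)⁻¹ = ∑_{j ≥ 0} (-X)^j 𝒥_i^j`. -/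
theorem product_formula_WgBT
    (k : ℕ) (hk : 1 ≤ k) :
    (fun m : PairPartition k => WgBT k m) = prodVec k k := by
  funext m
  apply PowerSeries.ext
  intro d
  exact congrFun (main_cfv k d) m
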